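/- arXiv:1411.2006 — 5 statements merged into one kernel-verified Lean document; each statement's English description precedes it below -/
import Mathlib

section
/- Let M be an n×n matrix with integer entries and determinant 1 or −1 which is hyperbolic, i.e. no root in ℂ of its characteristic polynomial has absolute value 1. If α and β are complex eigenvalues of M such that D(α) and D(β) are relatively prime, then D(αβ) is not a prime number. -/
open Polynomial IntermediateField


lemma adjoin_inv_eq (x : ℂ) (hx : x ≠ 0) : ℚ⟮x⁻¹⟯ = ℚ⟮x⟯ := by
  apply le_antisymm
  · exact adjoin_simple_le_iff.mpr (inv_mem (mem_adjoin_simple_self ℚ x))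
  · exact adjoin_simple_le_iff.mpr (by simpa using inv_mem (mem_adjoin_simple_self ℚ x⁻¹))

lemma abs_coeff_zero (x : ℂ) (h0 : x ≠ 0) (hx : IsIntegral ℤ x) (hx' : IsIntegral ℤ x⁻¹) :
    |(minpoly ℚ x).coeff 0| = 1 := by
  have hxq : IsIntegral ℚ x := hx.tower_top
  have hxq' : IsIntegral ℚ x⁻¹ := hx'.tower_top
  set f := minpoly ℚ x with hf
  have hq0 : f.coeff 0 ≠ 0 := minpoly.coeff_zero_ne_zero hxq h0
  -- degree of minpoly of x⁻¹ equals degree of f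
  have hdeg : (minpoly ℚ x⁻¹).natDegree = f.natDegree := by
    rw [← IntermediateField.adjoin.finrank hxq', ← IntermediateField.adjoin.finrank hxq,
      adjoin_inv_eq x h0]
  -- f.reverse has natDegree f.natDegree
  have htd : f.natTrailingDegree = 0 := Polynomial.natTrailingDegree_eq_zero.mpr (Or.inr hq0)
  have hrevdeg : f.reverse.natDegree = f.natDegree := by
    rw [Polynomial.reverse_natDegree, htd, Nat.sub_zero]
  have hmono : (C (f.coeff 0)⁻¹ * f.reverse).Monic := by
    have : (C (f.coeff 0)⁻¹ * f.reverse).leadingCoeff = 1 := by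
      rw [leadingCoeff_mul, leadingCoeff_C, Polynomial.reverse_leadingCoeff,
        Polynomial.trailingCoeff, htd, inv_mul_cancel₀ hq0]
    exact this
  have : Invertible x := invertibleOfNonzero h0
  have hev : aeval x⁻¹ (C (f.coeff 0)⁻¹ * f.reverse) = 0 := by
    have : aeval x⁻¹ f.reverse = 0 := by
      have := (Polynomial.eval₂_reverse_eq_zero_iff (algebraMap ℚ ℂ) x f).mpr ?_
      · simpa [aeval_def, invOf_eq_inv x] using this
      · simpa [aeval_def] using minpoly.aeval ℚ x
    simp [this]
  have hdvd : minpoly ℚ x⁻¹ ∣ C (f.coeff 0)⁻¹ * f.reverse := minpoly.dvd ℚ x⁻¹ hev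
  have hdegle : (C (f.coeff 0)⁻¹ * f.reverse).natDegree ≤ (minpoly ℚ x⁻¹).natDegree := by
    rw [hdeg, natDegree_C_mul (by simpa using hq0), hrevdeg]
  have heq : C (f.coeff 0)⁻¹ * f.reverse = minpoly ℚ x⁻¹ :=
    Polynomial.eq_of_monic_of_dvd_of_natDegree_le (minpoly.monic hxq') hmono hdvd hdegle
  -- coefficient 0 of minpoly of x⁻¹ is (f.coeff 0)⁻¹
  have hc : (minpoly ℚ x⁻¹).coeff 0 = (f.coeff 0)⁻¹ := by
    rw [← heq, coeff_C_mul, Polynomial.coeff_zero_reverse, (minpoly.monic hxq).leadingCoeff,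
      mul_one]
  -- integrality: both are integers
  have h1 : minpoly ℚ x = map (algebraMap ℤ ℚ) (minpoly ℤ x) :=
    minpoly.isIntegrallyClosed_eq_field_fractions' ℚ hx
  have h2 : minpoly ℚ x⁻¹ = map (algebraMap ℤ ℚ) (minpoly ℤ x⁻¹) :=
    minpoly.isIntegrallyClosed_eq_field_fractions' ℚ hx'
  have e1 : f.coeff 0 = ((minpoly ℤ x).coeff 0 : ℚ) := by rw [hf, h1]; simp
  have e2 : (f.coeff 0)⁻¹ = ((minpoly ℤ x⁻¹).coeff 0 : ℚ) := by rw [← hc, h2]; simp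
  have : ((minpoly ℤ x).coeff 0 * (minpoly ℤ x⁻¹).coeff 0 : ℚ) = 1 := by
    push_cast
    rw [← e1, ← e2, mul_inv_cancel₀ hq0]
  have hint : (minpoly ℤ x).coeff 0 * (minpoly ℤ x⁻¹).coeff 0 = 1 := by exact_mod_cast this
  have := Int.isUnit_iff.mp (IsUnit.of_mul_eq_one _ hint)
  rcases this with h | h <;> rw [e1, h] <;> norm_num

lemma charpoly_root_facts (n : ℕ) (M : Matrix (Fin n) (Fin n) ℤ)
    (hdet : M.det = 1 ∨ M.det = -1) {x : ℂ} (hx : (aeval x) M.charpoly = 0) :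
    x ≠ 0 ∧ IsIntegral ℤ x ∧ IsIntegral ℤ x⁻¹ := by
  have hs := M.det_eq_sign_charpoly_coeff
  have hc0 : M.charpoly.coeff 0 = 1 ∨ M.charpoly.coeff 0 = -1 := by
    rcases neg_one_pow_eq_or ℤ (Fintype.card (Fin n)) with h1 | h1 <;>
      rcases hdet with h2 | h2 <;> rw [h2, h1] at hs <;> omega
  have hc0ne : M.charpoly.coeff 0 ≠ 0 := by rcases hc0 with h | h <;> rw [h] <;> norm_num
  have hx0 : x ≠ 0 := by
    rintro rfl
    rw [aeval_def, Polynomial.eval₂_at_zero] at hx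
    exact hc0ne (by simpa using hx)
  refine ⟨hx0, ⟨M.charpoly, M.charpoly_monic, by rwa [aeval_def] at hx⟩, ?_⟩
  have : Invertible x := invertibleOfNonzero hx0
  have hrev : eval₂ (algebraMap ℤ ℂ) x⁻¹ M.charpoly.reverse = 0 := by
    have := (Polynomial.eval₂_reverse_eq_zero_iff (algebraMap ℤ ℂ) x M.charpoly).mpr
      (by rwa [aeval_def] at hx)
    rwa [invOf_eq_inv] at this
  have htd : M.charpoly.natTrailingDegree = 0 :=
    Polynomial.natTrailingDegree_eq_zero.mpr (Or.inr hc0ne)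
  have hrevlead : M.charpoly.reverse.leadingCoeff = M.charpoly.coeff 0 := by
    rw [Polynomial.reverse_leadingCoeff, Polynomial.trailingCoeff, htd]
  refine ⟨C (M.charpoly.coeff 0) * M.charpoly.reverse, ?_, ?_⟩
  · show (C (M.charpoly.coeff 0) * M.charpoly.reverse).leadingCoeff = 1
    rw [leadingCoeff_mul, leadingCoeff_C, hrevlead]
    rcases hc0 with h | h <;> rw [h] <;> norm_num
  · rw [eval₂_mul, eval₂_C, hrev, mul_zero]

lemma key (α β : ℂ) (hαi : IsIntegral ℚ α) (hβi : IsIntegral ℚ β) (hβ0 : β ≠ 0)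
    (hcop : Nat.Coprime (minpoly ℚ α).natDegree (minpoly ℚ β).natDegree) :
    (minpoly ℚ (α * β)).natDegree ∣
      (minpoly ℚ α).natDegree * (minpoly ℚ β).natDegree ∧
    ((minpoly ℚ (α * β)).natDegree ∣ (minpoly ℚ α).natDegree →
      |(minpoly ℚ α).coeff 0| = 1 → |(minpoly ℚ (α * β)).coeff 0| = 1 →
      ‖β‖ = 1) := by
  set a := (minpoly ℚ α).natDegree with ha
  set b := (minpoly ℚ β).natDegree with hb
  set γ := α * β with hγdef
  set m := (minpoly ℚ γ).natDegree with hm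
  have hγi : IsIntegral ℚ γ := hαi.mul hβi
  set K := ℚ⟮β⟯ with hK
  haveI : FiniteDimensional ℚ K := adjoin.finiteDimensional hβi
  have hαK : IsIntegral K α := hαi.tower_top
  have hγK : IsIntegral K γ := hγi.tower_top
  set L := K⟮α⟯ with hL
  haveI : FiniteDimensional K L := adjoin.finiteDimensional hαK
  set d := (minpoly K α).natDegree with hd
  have hfinKL : Module.finrank K L = d := adjoin.finrank hαK
  have hfinK : Module.finrank ℚ K = b := adjoin.finrank hβi
  set X := L.restrictScalars ℚ with hX
  have hXfin : Module.finrank ℚ X = b * d := by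
    rw [← hfinK, ← hfinKL]
    exact (Module.finrank_mul_finrank ℚ K L).symm
  -- d ≤ a
  have hmapne : (minpoly ℚ α).map (algebraMap ℚ K) ≠ 0 :=
    ((minpoly.monic hαi).map _).ne_zero
  have hdle : d ≤ a := by
    have := Polynomial.natDegree_le_of_dvd (minpoly.dvd_map_of_isScalarTower ℚ K α) hmapne
    rwa [natDegree_map] at this
  -- a ∣ b * d
  have hsub1 : ℚ⟮α⟯ ≤ X := adjoin_simple_le_iff.mpr (mem_adjoin_simple_self K α)
  have hβX : β ∈ L := by
    have := L.algebraMap_mem ⟨β, mem_adjoin_simple_self ℚ β⟩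
    simpa using this
  have hsub2 : ℚ⟮γ⟯ ≤ X :=
    adjoin_simple_le_iff.mpr (mul_mem (mem_adjoin_simple_self K α) hβX)
  have hadvd : a ∣ b * d := by
    rw [ha, ← hXfin, ← adjoin.finrank hαi]
    exact Dvd.intro _ (finrank_bot_mul_relfinrank hsub1)
  have hmdvd' : m ∣ b * d := by
    rw [hm, ← hXfin, ← adjoin.finrank hγi]
    exact Dvd.intro _ (finrank_bot_mul_relfinrank hsub2)
  have hdpos : 0 < d := minpoly.natDegree_pos hαK
  have hda : d = a := by
    have : a ∣ d := hcop.dvd_of_dvd_mul_right (by rwa [mul_comm] at hadvd)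
    exact le_antisymm hdle (Nat.le_of_dvd hdpos this)
  constructor
  · rw [hda, mul_comm b a] at hmdvd'
    exact hmdvd'
  intro hma hfabs hgabs
  -- K⟮γ⟯ = K⟮α⟯
  have hKγα : K⟮γ⟯ = L := by
    apply le_antisymm
    · exact adjoin_simple_le_iff.mpr (mul_mem (mem_adjoin_simple_self K α) hβX)
    · apply adjoin_simple_le_iff.mpr
      have hβKγ : β⁻¹ ∈ K⟮γ⟯ := by
        have := K⟮γ⟯.algebraMap_mem (⟨β, mem_adjoin_simple_self ℚ β⟩⁻¹)
        simpa using this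
      have : γ * β⁻¹ ∈ K⟮γ⟯ := mul_mem (mem_adjoin_simple_self K γ) hβKγ
      have hγβ : γ * β⁻¹ = α := by field_simp; rw [hγdef, mul_comm]
      rwa [hγβ] at this
  set e := (minpoly K γ).natDegree with he
  have heq_ed : e = d := by
    rw [he, hd, ← adjoin.finrank hγK, ← adjoin.finrank hαK, hKγα]
  have hmapγne : (minpoly ℚ γ).map (algebraMap ℚ K) ≠ 0 :=
    ((minpoly.monic hγi).map _).ne_zero
  have hele : e ≤ m := by
    have := Polynomial.natDegree_le_of_dvd (minpoly.dvd_map_of_isScalarTower ℚ K γ) hmapγne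
    rwa [natDegree_map] at this
  have hma' : m = a := le_antisymm (Nat.le_of_dvd (by omega) hma)
    (by omega)
  -- minpoly K γ = map of minpoly ℚ γ
  have hgeq : (minpoly ℚ γ).map (algebraMap ℚ K) = minpoly K γ :=
    Polynomial.eq_of_monic_of_dvd_of_natDegree_le (minpoly.monic hγK)
      ((minpoly.monic hγi).map _) (minpoly.dvd_map_of_isScalarTower ℚ K γ)
      (by rw [natDegree_map]; omega)
  have hfeq : (minpoly ℚ α).map (algebraMap ℚ K) = minpoly K α :=
    Polynomial.eq_of_monic_of_dvd_of_natDegree_le (minpoly.monic hαK)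
      ((minpoly.monic hαi).map _) (minpoly.dvd_map_of_isScalarTower ℚ K α)
      (by rw [natDegree_map]; omega)
  -- scaleRoots
  set βK : K := ⟨β, mem_adjoin_simple_self ℚ β⟩ with hβK
  set h := (minpoly K α).scaleRoots βK with hh
  have hmono : h.Monic := (monic_scaleRoots_iff βK).mpr (minpoly.monic hαK)
  have hhev : aeval γ h = 0 := by
    have hcast : algebraMap K ℂ βK = β := rfl
    have := Polynomial.scaleRoots_eval₂_mul (p := minpoly K α) (algebraMap K ℂ) α βK
    rw [hcast] at this
    have h2 : eval₂ (algebraMap K ℂ) α (minpoly K α) = 0 := by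
      have := minpoly.aeval K α; rwa [aeval_def] at this
    rw [aeval_def, hγdef, mul_comm α β, ← hcast]
    rw [hcast, this, h2, mul_zero]
  have hhdeg : h.natDegree = d := natDegree_scaleRoots _ _
  have hheq : h = minpoly K γ :=
    Polynomial.eq_of_monic_of_dvd_of_natDegree_le (minpoly.monic hγK) hmono
      (minpoly.dvd K γ hhev) (by omega)
  -- constant coefficients
  have hc0 : algebraMap ℚ K ((minpoly ℚ γ).coeff 0)
      = algebraMap ℚ K ((minpoly ℚ α).coeff 0) * βK ^ d := by
    have h1 : (minpoly K γ).coeff 0 = algebraMap ℚ K ((minpoly ℚ γ).coeff 0) := by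
      rw [← hgeq, coeff_map]
    have h2 : h.coeff 0 = (minpoly K α).coeff 0 * βK ^ d := by
      rw [hh, coeff_scaleRoots, Nat.sub_zero, hd]
    have h3 : (minpoly K α).coeff 0 = algebraMap ℚ K ((minpoly ℚ α).coeff 0) := by
      rw [← hfeq, coeff_map]
    rw [← h1, ← hheq, h2, h3]
  -- push to ℂ
  have hc1 : ((minpoly ℚ γ).coeff 0 : ℂ) = ((minpoly ℚ α).coeff 0 : ℂ) * β ^ d := by
    have := congrArg (algebraMap K ℂ) hc0
    rw [map_mul, map_pow] at this
    have hcast : algebraMap K ℂ βK = β := rfl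
    rw [hcast] at this
    rw [← IsScalarTower.algebraMap_apply, ← IsScalarTower.algebraMap_apply] at this
    simpa using this
  have habs := congrArg (‖·‖) hc1
  rw [norm_mul, norm_pow] at habs
  have hra : ‖((minpoly ℚ α).coeff 0 : ℂ)‖ = 1 := by
    rw [show (((minpoly ℚ α).coeff 0 : ℚ) : ℂ) = ((((minpoly ℚ α).coeff 0 : ℚ) : ℝ) : ℂ) by
      push_cast; ring, Complex.norm_real, Real.norm_eq_abs]
    rw [← Rat.cast_abs, hfabs]; norm_num
  have hrg : ‖((minpoly ℚ γ).coeff 0 : ℂ)‖ = 1 := by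
    rw [show (((minpoly ℚ γ).coeff 0 : ℚ) : ℂ) = ((((minpoly ℚ γ).coeff 0 : ℚ) : ℝ) : ℂ) by
      push_cast; ring, Complex.norm_real, Real.norm_eq_abs]
    rw [← Rat.cast_abs, hgabs]; norm_num
  rw [hra, hrg, one_mul] at habs
  rcases lt_trichotomy ‖β‖ 1 with h1 | h1 | h1
  · have := pow_lt_one₀ (norm_nonneg β) h1 (show d ≠ 0 by omega)
    rw [habs.symm] at this
    exact absurd this (by norm_num)
  · exact h1
  · have := one_lt_pow₀ h1 (show d ≠ 0 by omega)
    rw [habs.symm] at this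
    exact absurd this (by norm_num)

/-- Let `M` be an `n × n` integer matrix with determinant `±1` which is hyperbolic (no
complex root of its characteristic polynomial has absolute value `1`). If `α` and `β` are
complex eigenvalues of `M` whose minimal polynomials over `ℚ` have coprime degrees, then
the degree of the minimal polynomial of `α * β` is not a prime number. -/
theorem degree_of_product_not_prime (n : ℕ) (M : Matrix (Fin n) (Fin n) ℤ)
    (hdet : M.det = 1 ∨ M.det = -1)
    (hhyp : ∀ z : ℂ, (aeval z) M.charpoly = 0 → ‖z‖ ≠ 1)
    (α β : ℂ) (hα : (aeval α) M.charpoly = 0) (hβ : (aeval β) M.charpoly = 0)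
    (hcop : Nat.Coprime (minpoly ℚ α).natDegree (minpoly ℚ β).natDegree) :
    ¬ Nat.Prime (minpoly ℚ (α * β)).natDegree := by
  intro hp
  obtain ⟨hα0, hαZ, hαZ'⟩ := charpoly_root_facts n M hdet hα
  obtain ⟨hβ0, hβZ, hβZ'⟩ := charpoly_root_facts n M hdet hβ
  have hαi : IsIntegral ℚ α := hαZ.tower_top
  have hβi : IsIntegral ℚ β := hβZ.tower_top
  have hγZ : IsIntegral ℤ (α * β) := hαZ.mul hβZ
  have hγZ' : IsIntegral ℤ (α * β)⁻¹ := by rw [mul_inv]; exact hαZ'.mul hβZ'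
  have hγ0 : α * β ≠ 0 := mul_ne_zero hα0 hβ0
  have hαabs : |(minpoly ℚ α).coeff 0| = 1 := abs_coeff_zero α hα0 hαZ hαZ'
  have hβabs : |(minpoly ℚ β).coeff 0| = 1 := abs_coeff_zero β hβ0 hβZ hβZ'
  have hγabs : |(minpoly ℚ (α * β)).coeff 0| = 1 := abs_coeff_zero (α * β) hγ0 hγZ hγZ'
  obtain ⟨hdvd, hkey⟩ := key α β hαi hβi hβ0 hcop
  rcases (hp.dvd_mul).mp hdvd with hma | hmb
  · exact hhyp β hβ (hkey hma hαabs hγabs)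
  · obtain ⟨_, hkey'⟩ := key β α hβi hαi hα0 hcop.symm
    rw [mul_comm β α] at hkey'
    exact hhyp α hα (hkey' hmb hβabs hγabs)
end

section
/- Let M be an n×n matrix with integer entries and determinant 1 or −1 which is hyperbolic, i.e. no root in ℂ of its characteristic polynomial has absolute value 1. If α, β and αβ are all complex eigenvalues of M and D(α) ≤ D(β), then gcd(D(β), D(αβ)) ≠ 1. -/
open Polynomial

open IntermediateField Module in
private lemma minpoly_coeff_zero_sq (n : ℕ) (M : Matrix (Fin n) (Fin n) ℤ)
    (hdet : M.det = 1 ∨ M.det = -1) (x : ℂ) (hx : (aeval x) M.charpoly = 0) :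
    ((minpoly ℚ x).coeff 0) ^ 2 = 1 := by
  have hint : IsIntegral ℤ x := ⟨M.charpoly, M.charpoly_monic, by rwa [aeval_def] at hx⟩
  obtain ⟨c, hc⟩ := minpoly.isIntegrallyClosed_dvd hint hx
  have hdet2 : (M.det) ^ 2 = 1 := by rcases hdet with h | h <;> rw [h] <;> ring
  have hsign : ((-1 : ℤ) ^ (Fintype.card (Fin n))) ^ 2 = 1 := by
    rw [← pow_mul, mul_comm, pow_mul]; norm_num
  have hcp : (M.charpoly.coeff 0) ^ 2 = 1 := by
    have h := M.det_eq_sign_charpoly_coeff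
    have h2 : (M.det) ^ 2 = ((-1 : ℤ) ^ (Fintype.card (Fin n))) ^ 2 * (M.charpoly.coeff 0) ^ 2 := by
      rw [h]; ring
    rw [hdet2, hsign, one_mul] at h2
    exact h2.symm
  have h0 : (minpoly ℤ x).coeff 0 * c.coeff 0 = M.charpoly.coeff 0 := by
    rw [hc, mul_coeff_zero]
  have hz : ((minpoly ℤ x).coeff 0) ^ 2 * (c.coeff 0) ^ 2 = 1 := by
    rw [← mul_pow, h0]; exact hcp
  have h1 : ((minpoly ℤ x).coeff 0) ^ 2 = 1 :=
    Int.eq_one_of_mul_eq_one_right (sq_nonneg _) hz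
  have heq : minpoly ℚ x = (minpoly ℤ x).map (Int.castRingHom ℚ) := by
    have := minpoly.isIntegrallyClosed_eq_field_fractions' ℚ hint
    rwa [show algebraMap ℤ ℚ = Int.castRingHom ℚ from rfl] at this
  rw [heq, coeff_map]
  have : (((minpoly ℤ x).coeff 0 : ℤ) : ℚ) ^ 2 = ((1 : ℤ) : ℚ) := by
    rw [← Int.cast_pow, h1]
  simpa using this

open IntermediateField Module in
set_option maxHeartbeats 1000000 in
/-- Let `M` be an `n × n` integer matrix with determinant `±1` which is hyperbolic (no
complex root of its characteristic polynomial has absolute value `1`). If `α`, `β` and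
`α * β` are all complex eigenvalues of `M` and `D(α) ≤ D(β)`, then
`gcd (D(β), D(αβ)) ≠ 1`, where `D(λ)` is the degree of the minimal polynomial of `λ`
over `ℚ`. -/
theorem gcd_of_degrees_ne_one (n : ℕ) (M : Matrix (Fin n) (Fin n) ℤ)
    (hdet : M.det = 1 ∨ M.det = -1)
    (hhyp : ∀ z : ℂ, (aeval z) M.charpoly = 0 → ‖z‖ ≠ 1)
    (α β : ℂ) (hα : (aeval α) M.charpoly = 0) (hβ : (aeval β) M.charpoly = 0)
    (hαβ : (aeval (α * β)) M.charpoly = 0)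
    (hle : (minpoly ℚ α).natDegree ≤ (minpoly ℚ β).natDegree) :
    Nat.gcd (minpoly ℚ β).natDegree (minpoly ℚ (α * β)).natDegree ≠ 1 := by
  classical
  intro hgcd
  -- notation
  set γ : ℂ := α * β with hγdef
  -- integrality
  have hintZ : ∀ x : ℂ, (aeval x) M.charpoly = 0 → IsIntegral ℤ x := fun x hx =>
    ⟨M.charpoly, M.charpoly_monic, by rwa [aeval_def] at hx⟩
  have hiα : IsIntegral ℚ α := (hintZ α hα).tower_top
  have hiβ : IsIntegral ℚ β := (hintZ β hβ).tower_top
  have hiγ : IsIntegral ℚ γ := (hintZ γ hαβ).tower_top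
  -- coefficient facts
  have hsqα := minpoly_coeff_zero_sq n M hdet α hα
  have hsqβ := minpoly_coeff_zero_sq n M hdet β hβ
  -- nonvanishing
  have hzero : ∀ x : ℂ, (aeval x) M.charpoly = 0 → x ≠ 0 := by
    intro x hx hx0
    have hsq := minpoly_coeff_zero_sq n M hdet x hx
    rw [hx0, minpoly.zero] at hsq
    simp at hsq
  have hβ0 : β ≠ 0 := hzero β hβ
  -- basic degrees
  set m : ℕ := (minpoly ℚ β).natDegree with hm
  set k : ℕ := (minpoly ℚ γ).natDegree with hk
  set a : ℕ := (minpoly ℚ α).natDegree with ha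
  have hapos : 0 < a := minpoly.natDegree_pos hiα
  -- the field F = ℚ(γ)
  set F : IntermediateField ℚ ℂ := ℚ⟮γ⟯ with hF
  haveI : FiniteDimensional ℚ F := IntermediateField.adjoin.finiteDimensional hiγ
  have hγF : γ ∈ F := IntermediateField.mem_adjoin_simple_self ℚ γ
  set g : F := ⟨γ, hγF⟩ with hg
  have hiβF : IsIntegral F β := hiβ.tower_top
  set K : IntermediateField F ℂ := F⟮β⟯ with hK
  haveI : FiniteDimensional F K := IntermediateField.adjoin.finiteDimensional hiβF
  haveI : FiniteDimensional ℚ K := FiniteDimensional.trans ℚ F K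
  set t : ℕ := (minpoly F β).natDegree with htdef
  have htK : finrank F K = t := IntermediateField.adjoin.finrank hiβF
  have hkF : finrank ℚ F = k := IntermediateField.adjoin.finrank hiγ
  have hβK : β ∈ K := IntermediateField.mem_adjoin_simple_self F β
  -- m divides k * t
  have hmdvd : m ∣ finrank ℚ K := by
    have h1 : minpoly ℚ ((⟨β, hβK⟩ : K)) = minpoly ℚ β := by
      have := minpoly.algebraMap_eq (A := ℚ) (B := K) (B' := ℂ)
        (algebraMap K ℂ).injective (⟨β, hβK⟩ : K)
      rw [show algebraMap K ℂ (⟨β, hβK⟩ : K) = β from rfl] at this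
      exact this.symm
    have h2 := minpoly.degree_dvd (K := ℚ) (IsIntegral.of_finite ℚ ((⟨β, hβK⟩ : K)))
    rwa [h1] at h2
  have hrank : finrank ℚ K = k * t := by
    rw [← Module.finrank_mul_finrank ℚ F K, hkF, htK]
  -- t ≤ m
  have hdvdq : minpoly F β ∣ (minpoly ℚ β).map (algebraMap ℚ F) :=
    minpoly.dvd F β (by rw [aeval_map_algebraMap]; exact minpoly.aeval ℚ β)
  have hqmono : ((minpoly ℚ β).map (algebraMap ℚ F)).Monic :=
    (minpoly.monic hiβ).map _
  have htle : t ≤ m := by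
    have := natDegree_le_of_dvd hdvdq hqmono.ne_zero
    rwa [natDegree_map] at this
  -- m ∣ t hence t = m
  have hcop : Nat.Coprime m k := hgcd
  have hmdt : m ∣ t := by
    have : m ∣ k * t := hrank ▸ hmdvd
    exact hcop.dvd_of_dvd_mul_left this
  have htpos : 0 < t := minpoly.natDegree_pos hiβF
  have htm : t = m := le_antisymm htle (Nat.le_of_dvd htpos hmdt)
  -- minpoly F β = map of minpoly ℚ β
  have hq' : minpoly F β = (minpoly ℚ β).map (algebraMap ℚ F) := by
    apply eq_of_dvd_of_natDegree_le_of_leadingCoeff hdvdq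
    · rw [natDegree_map, ← htdef, htm]
    · rw [(minpoly.monic hiβF).leadingCoeff, hqmono.leadingCoeff]
  -- the auxiliary polynomial r over F with root β
  set p' : F[X] := (minpoly ℚ α).map (algebraMap ℚ F) with hp'
  have hp'deg : p'.natDegree = a := by rw [hp', natDegree_map]
  have hp'monic : p'.Monic := (minpoly.monic hiα).map _
  have hp'0 : (p'.coeff 0) ^ 2 = 1 := by
    rw [hp', coeff_map, ← map_pow, hsqα, map_one]
  have hp'0ne : p'.coeff 0 ≠ 0 := by
    intro h; rw [h] at hp'0; simp at hp'0
  set r : F[X] := ∑ i ∈ Finset.range (a + 1), C (p'.coeff i * g ^ i) * X ^ (a - i) with hr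
  -- β is a root of r
  have hroot : (aeval β) r = 0 := by
    have hcast : ∀ x : F, (algebraMap F ℂ) x = (x : ℂ) := fun x => rfl
    have hsum : (aeval β) r = ∑ i ∈ Finset.range (a + 1),
        ((p'.coeff i : ℂ) * γ ^ i) * β ^ (a - i) := by
      rw [hr, map_sum]
      refine Finset.sum_congr rfl fun i _ => ?_
      rw [map_mul, aeval_C, map_mul, map_pow, map_pow, aeval_X]
      rfl
    have hterm : ∀ i ∈ Finset.range (a + 1),
        ((p'.coeff i : ℂ) * γ ^ i) * β ^ (a - i) = ((p'.coeff i : ℂ) * α ^ i) * β ^ a := by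
      intro i hi
      have hia : i ≤ a := Nat.lt_succ_iff.mp (Finset.mem_range.mp hi)
      have : γ ^ i * β ^ (a - i) = α ^ i * β ^ a := by
        rw [hγdef, mul_pow, mul_assoc, ← pow_add, Nat.add_sub_cancel' hia]
      calc ((p'.coeff i : ℂ) * γ ^ i) * β ^ (a - i)
          = (p'.coeff i : ℂ) * (γ ^ i * β ^ (a - i)) := by ring
        _ = (p'.coeff i : ℂ) * (α ^ i * β ^ a) := by rw [this]
        _ = ((p'.coeff i : ℂ) * α ^ i) * β ^ a := by ring
    rw [hsum, Finset.sum_congr rfl hterm, ← Finset.sum_mul]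
    have : ∑ i ∈ Finset.range (a + 1), (p'.coeff i : ℂ) * α ^ i = (aeval α) (minpoly ℚ α) := by
      rw [aeval_eq_sum_range]
      refine Finset.sum_congr rfl fun i _ => ?_
      rw [hp', coeff_map]
      have : ((algebraMap ℚ F) ((minpoly ℚ α).coeff i) : ℂ) =
          (algebraMap ℚ ℂ) ((minpoly ℚ α).coeff i) :=
        (IsScalarTower.algebraMap_apply ℚ F ℂ _).symm
      rw [this]
      simp [Algebra.smul_def]
    rw [this, minpoly.aeval, zero_mul]
  -- coefficients of r
  have hrcoeff : ∀ j, r.coeff j = ∑ i ∈ Finset.range (a + 1),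
      if j = a - i then p'.coeff i * g ^ i else 0 := by
    intro j
    rw [hr, finset_sum_coeff]
    refine Finset.sum_congr rfl fun i _ => ?_
    rw [coeff_C_mul, coeff_X_pow, mul_ite, mul_one, mul_zero]
  have hrtop : r.coeff a = p'.coeff 0 := by
    rw [hrcoeff a]
    rw [Finset.sum_eq_single 0]
    · simp
    · intro i hi hine
      have hia : i ≤ a := Nat.lt_succ_iff.mp (Finset.mem_range.mp hi)
      have : ¬(a = a - i) := by omega
      simp [this]
    · intro h; simp at h
  have hrbot : r.coeff 0 = g ^ a := by
    rw [hrcoeff 0]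
    rw [Finset.sum_eq_single a]
    · have : p'.coeff a = 1 := by
        have := hp'monic
        rw [Monic, leadingCoeff, hp'deg] at this
        exact this
      simp [this]
    · intro i hi hine
      have hia : i ≤ a := Nat.lt_succ_iff.mp (Finset.mem_range.mp hi)
      have : ¬((0:ℕ) = a - i) := by omega
      simp [this]
    · intro h; simp at h
  have hrdegle : r.natDegree ≤ a := by
    rw [hr]
    refine natDegree_sum_le_of_forall_le _ _ fun i hi => ?_
    refine (natDegree_C_mul_le _ _).trans ?_
    rw [natDegree_X_pow]
    omega
  have hrne : r ≠ 0 := fun h => hp'0ne (by rw [← hrtop, h, coeff_zero])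
  -- minpoly F β divides r
  have hdvdr : minpoly F β ∣ r := minpoly.dvd F β hroot
  have hmler : m ≤ r.natDegree := by
    have := natDegree_le_of_dvd hdvdr hrne
    omega
  have ham : a = m := le_antisymm hle (hmler.trans hrdegle)
  have hrdeg : r.natDegree = a := le_antisymm hrdegle (ham ▸ hmler)
  -- write r = minpoly F β * C u, compare coefficients
  obtain ⟨u, hu⟩ := hdvdr
  have hune : u ≠ 0 := fun h => hrne (by rw [hu, h, mul_zero])
  have hudeg : u.natDegree = 0 := by
    have := natDegree_mul (minpoly.ne_zero hiβF) hune
    rw [← hu, hrdeg, ← htdef, htm, ← ham] at this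
    omega
  have huC : u = C (u.coeff 0) := eq_C_of_natDegree_eq_zero hudeg
  have huval : u.coeff 0 = p'.coeff 0 := by
    have h1 : r.leadingCoeff = (minpoly F β).leadingCoeff * u.leadingCoeff := by
      rw [hu, leadingCoeff_mul]
    rw [(minpoly.monic hiβF).leadingCoeff, one_mul] at h1
    have h2 : r.leadingCoeff = r.coeff a := by rw [leadingCoeff, hrdeg]
    have h3 : u.leadingCoeff = u.coeff 0 := by rw [leadingCoeff, hudeg]
    rw [h2, hrtop, h3] at h1
    exact h1.symm
  -- key identity : g ^ a = (minpoly F β).coeff 0 * p'.coeff 0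
  have hkey : g ^ a = (minpoly F β).coeff 0 * p'.coeff 0 := by
    have : r.coeff 0 = (minpoly F β).coeff 0 * u.coeff 0 := by
      rw [hu, mul_coeff_zero]
    rw [hrbot, huval] at this
    exact this
  have hq0 : ((minpoly F β).coeff 0) ^ 2 = 1 := by
    rw [hq', coeff_map, ← map_pow, hsqβ, map_one]
  -- deduce γ ^ (2 * a) = 1
  have hfin : (g ^ a) ^ 2 = 1 := by
    rw [hkey, mul_pow, hq0, hp'0, one_mul]
  have hfinC : (γ ^ a) ^ 2 = 1 := by
    have := congrArg (algebraMap F ℂ) hfin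
    rw [map_pow, map_pow, map_one] at this
    rwa [show (algebraMap F ℂ) g = γ from rfl] at this
  have habs : ‖γ‖ = 1 := by
    have h1 : (‖γ‖) ^ (a * 2) = 1 := by
      rw [pow_mul, ← norm_pow, ← norm_pow, hfinC, norm_one]
    have h2 : a * 2 ≠ 0 := by omega
    have h3 : 0 ≤ ‖γ‖ := norm_nonneg γ
    rcases lt_trichotomy (‖γ‖) 1 with h | h | h
    · exact absurd h1 (ne_of_lt (pow_lt_one₀ h3 h h2))
    · exact h
    · exact absurd h1.symm (ne_of_lt (one_lt_pow₀ h h2))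
  exact hhyp γ hαβ habs
end

section
/- Let 𝔫 be a rational nilpotent Anosov Lie algebra of nilpotency class r ≥ 2. Then the quotient Lie algebra 𝔫 / C^{r-1}(𝔫) is an Anosov Lie algebra. -/
open Polynomial
open scoped TensorProduct

/-- An endomorphism of a finite-dimensional vector space over a subfield `K` of `ℂ` is
*hyperbolic* if no root in `ℂ` of its characteristic polynomial has absolute value `1`. -/
def IsHyperbolicEnd {K L : Type*} [Field K] [Algebra K ℂ] [AddCommGroup L] [Module K L]
    [Module.Finite K L] (τ : L →ₗ[K] L) : Prop :=
  ∀ z : ℂ, (aeval z) (LinearMap.charpoly τ) = 0 → ‖z‖ ≠ 1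

/-- An endomorphism is *unimodular* if there is a basis in which its matrix has integer
entries and determinant `±1`. -/
def IsUnimodularEnd {K L : Type*} [Field K] [AddCommGroup L] [Module K L]
    (τ : L →ₗ[K] L) : Prop :=
  ∃ (n : ℕ) (bas : Module.Basis (Fin n) K L) (A : Matrix (Fin n) (Fin n) ℤ),
    (∀ i j, LinearMap.toMatrix bas bas τ i j = (A i j : K)) ∧ (A.det = 1 ∨ A.det = -1)

/-- A rational Lie algebra is *Anosov* if it admits a hyperbolic unimodular automorphism. -/
def IsAnosovRat (L : Type*) [LieRing L] [LieAlgebra ℚ L] [Module.Finite ℚ L] : Prop :=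
  ∃ τ : L ≃ₗ⁅ℚ⁆ L, IsHyperbolicEnd τ.toLieHom.toLinearMap ∧
    IsUnimodularEnd τ.toLieHom.toLinearMap

/-- A real Lie algebra is *Anosov* if it has a rational form which is Anosov. -/
def IsAnosovReal (L : Type*) [LieRing L] [LieAlgebra ℝ L] : Prop :=
  ∃ (n₀ : Type) (_ : LieRing n₀) (_ : LieAlgebra ℚ n₀) (_ : Module.Finite ℚ n₀),
    IsAnosovRat n₀ ∧ Nonempty (L ≃ₗ⁅ℝ⁆ ℝ ⊗[ℚ] n₀)

/-- A complex Lie algebra is *Anosov* if it has a rational form which is Anosov. -/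
def IsAnosovComplex (L : Type*) [LieRing L] [LieAlgebra ℂ L] : Prop :=
  ∃ (n₀ : Type) (_ : LieRing n₀) (_ : LieAlgebra ℚ n₀) (_ : Module.Finite ℚ n₀),
    IsAnosovRat n₀ ∧ Nonempty (L ≃ₗ⁅ℂ⁆ ℂ ⊗[ℚ] n₀)

section Aux

variable {L : Type*} [LieRing L] [LieAlgebra ℚ L]

noncomputable def quotEquivOfMapEq (W : LieIdeal ℚ L) (τ : L ≃ₗ⁅ℚ⁆ L)
    (hmap : (W : Submodule ℚ L).map (τ.toLinearEquiv : L →ₗ[ℚ] L) = W) :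
    (L ⧸ W) ≃ₗ⁅ℚ⁆ (L ⧸ W) :=
  let e : (L ⧸ W) ≃ₗ[ℚ] (L ⧸ W) :=
    Submodule.Quotient.equiv (W : Submodule ℚ L) (W : Submodule ℚ L) τ.toLinearEquiv hmap
  { toFun := e
    map_add' := e.map_add
    map_smul' := e.map_smul
    map_lie' := by
      rintro ⟨x⟩ ⟨y⟩
      show e (LieSubmodule.Quotient.mk' W ⁅x, y⁆) =
        ⁅e (LieSubmodule.Quotient.mk' W x), e (LieSubmodule.Quotient.mk' W y)⁆
      have he : ∀ z : L, e (LieSubmodule.Quotient.mk' W z) =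
          LieSubmodule.Quotient.mk' W (τ z) := fun z => by
        simp [e, Submodule.Quotient.equiv, Submodule.mapQ_apply]
        rfl
      rw [he, he, he]
      rw [LieEquiv.map_lie]
      exact LieSubmodule.Quotient.mk_bracket (I := W) (τ x) (τ y)
    invFun := e.symm
    left_inv := e.left_inv
    right_inv := e.right_inv }

theorem quotEquivOfMapEq_mk (W : LieIdeal ℚ L) (τ : L ≃ₗ⁅ℚ⁆ L)
    (hmap : (W : Submodule ℚ L).map (τ.toLinearEquiv : L →ₗ[ℚ] L) = W) (x : L) :
    quotEquivOfMapEq W τ hmap (LieSubmodule.Quotient.mk' W x)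
      = LieSubmodule.Quotient.mk' W (τ x) := by
  simp [quotEquivOfMapEq, Submodule.Quotient.equiv, Submodule.mapQ_apply]
  rfl

theorem isAnosovRat_of_subsingleton (M : Type*) [LieRing M] [LieAlgebra ℚ M]
    [Module.Finite ℚ M] [Subsingleton M] : IsAnosovRat M := by
  refine ⟨LieEquiv.refl, ?_, ?_⟩
  · intro z hz
    have h1 : LinearMap.charpoly (LieEquiv.refl : M ≃ₗ⁅ℚ⁆ M).toLieHom.toLinearMap = 1 := by
      have := LinearMap.charpoly_monic (LieEquiv.refl : M ≃ₗ⁅ℚ⁆ M).toLieHom.toLinearMap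
      have hdeg : (LinearMap.charpoly
          (LieEquiv.refl : M ≃ₗ⁅ℚ⁆ M).toLieHom.toLinearMap).natDegree = 0 := by
        rw [LinearMap.charpoly_natDegree]
        simp [Module.finrank_zero_of_subsingleton]
      exact this.natDegree_eq_zero.mp hdeg
    rw [h1] at hz
    simp at hz
  · exact ⟨0, Module.Basis.empty M, 1, by simp, Or.inl (by simp)⟩

set_option maxHeartbeats 1000000 in
theorem aux_quot_anosov [Module.Finite ℚ L] (W : LieIdeal ℚ L) (τ : L ≃ₗ⁅ℚ⁆ L)
    (hmap : (W : Submodule ℚ L).map (τ.toLinearEquiv : L →ₗ[ℚ] L) = W)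
    (hhyp : IsHyperbolicEnd τ.toLieHom.toLinearMap)
    (huni : IsUnimodularEnd τ.toLieHom.toLinearMap) :
    IsAnosovRat (L ⧸ W) := by
  classical
  obtain ⟨n, bas, A, hAeq, hdetA⟩ := huni
  rcases subsingleton_or_nontrivial L with hL | hL
  · have : Subsingleton (L ⧸ W) := Quotient.instSubsingletonQuotient _
    exact isAnosovRat_of_subsingleton _
  have hne : Nonempty (Fin n) := bas.index_nonempty
  -- the lattice
  set v : Fin n → L := ⇑bas with hv
  have liℤ : LinearIndependent ℤ v :=
    (LinearIndependent.iff_fractionRing ℤ ℚ).mpr bas.linearIndependent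
  set Λ : Submodule ℤ L := Submodule.span ℤ (Set.range v) with hΛ
  let bΛ : Module.Basis (Fin n) ℤ Λ := Module.Basis.span liℤ
  set N : Submodule ℤ Λ :=
    (Submodule.restrictScalars ℤ (W : Submodule ℚ L)).comap Λ.subtype with hN
  obtain ⟨m, bM, bN, f, a, hsnf⟩ := N.smithNormalForm bΛ
  -- the rational basis coming from the lattice basis
  have liℤ' : LinearIndependent ℤ (fun i => (bM i : L)) :=
    bM.linearIndependent.map' Λ.subtype (Submodule.ker_subtype Λ)
  have liℚ' : LinearIndependent ℚ (fun i => (bM i : L)) :=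
    (LinearIndependent.iff_fractionRing ℤ ℚ).mp liℤ'
  have hcard : Fintype.card (Fin n) = Module.finrank ℚ L := by
    rw [Module.finrank_eq_card_basis bas, Fintype.card_fin]
  let bMQ : Module.Basis (Fin n) ℚ L := basisOfLinearIndependentOfCardEqFinrank liℚ' hcard
  have hbMQ : ∀ i, bMQ i = (bM i : L) := fun i => by
    rw [show bMQ = _ from rfl, coe_basisOfLinearIndependentOfCardEqFinrank]
  -- τ preserves the lattice
  have hτv : ∀ j, τ (v j) = ∑ i, (A i j : ℚ) • v i := by
    intro j
    conv_lhs => rw [show τ (v j) = τ.toLieHom.toLinearMap (v j) from rfl,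
      ← bas.sum_repr (τ.toLieHom.toLinearMap (v j))]
    refine Finset.sum_congr rfl fun i _ => ?_
    congr 1
    rw [← hAeq i j, LinearMap.toMatrix_apply]
  have hτΛ : ∀ x ∈ Λ, τ x ∈ Λ := by
    intro x hx
    induction hx using Submodule.span_induction with
    | mem x hx =>
      obtain ⟨j, rfl⟩ := hx
      rw [hτv j]
      exact Submodule.sum_mem _ fun i _ => by
        rw [Int.cast_smul_eq_zsmul]
        exact Submodule.smul_mem _ _ (Submodule.subset_span ⟨i, rfl⟩)
    | zero =>
      show τ.toLieHom.toLinearMap 0 ∈ Λ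
      rw [map_zero]; exact Submodule.zero_mem Λ
    | add x y _ _ hx hy =>
      show τ.toLieHom.toLinearMap (x + y) ∈ Λ
      rw [map_add]; exact Submodule.add_mem _ hx hy
    | smul c x _ hx =>
      show τ.toLieHom.toLinearMap (c • x) ∈ Λ
      rw [map_zsmul]; exact Submodule.smul_mem _ _ hx
  -- a i ≠ 0 and bMQ (f i) ∈ W
  have hai : ∀ i, a i ≠ 0 := by
    intro i h
    apply bN.ne_zero i
    have := hsnf i
    rw [h, zero_smul] at this
    exact Subtype.coe_injective (by simpa using this)
  have hbNW : ∀ i, ((bN i : Λ) : L) ∈ (W : Submodule ℚ L) := fun i => (bN i).2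
  have hbNL : ∀ i, ((bN i : Λ) : L) = (a i : ℚ) • bMQ (f i) := fun i => by
    rw [hsnf i, hbMQ, Submodule.coe_smul, Int.cast_smul_eq_zsmul]
  have haW : ∀ i, bMQ (f i) ∈ (W : Submodule ℚ L) := by
    intro i
    have : bMQ (f i) = ((a i : ℚ))⁻¹ • ((bN i : Λ) : L) := by
      rw [hbNL i, smul_smul, inv_mul_cancel₀ (by exact_mod_cast hai i), one_smul]
    rw [this]
    exact Submodule.smul_mem _ _ (hbNW i)
  -- W is spanned by the basis vectors indexed by the range of f
  have hWspan : (W : Submodule ℚ L) = Submodule.span ℚ (bMQ '' Set.range ⇑f) := by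
    apply le_antisymm
    · intro w hw
      obtain ⟨d, hd⟩ := IsLocalization.exist_integer_multiples_of_finite
        (nonZeroDivisors ℤ) (fun i => bMQ.repr w i)
      choose c hc using hd
      have hd0 : ((d : ℤ) : ℚ) ≠ 0 := Int.cast_ne_zero.mpr (nonZeroDivisors.coe_ne_zero d)
      have hdw : ((d : ℤ) : ℚ) • w = ∑ i, (c i : ℚ) • bMQ i := by
        conv_lhs => rw [← bMQ.sum_repr w, Finset.smul_sum]
        refine Finset.sum_congr rfl fun i _ => ?_
        rw [smul_smul]
        congr 1
        have := hc i
        simpa [Algebra.smul_def] using this.symm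
      set yΛ : Λ := ∑ i, c i • bM i with hyΛ
      have hyL : (yΛ : L) = ((d : ℤ) : ℚ) • w := by
        rw [hdw, hyΛ]
        push_cast [Submodule.coe_sum]
        refine Finset.sum_congr rfl fun i _ => ?_
        rw [hbMQ, Int.cast_smul_eq_zsmul]
      have hyN : yΛ ∈ N := by
        show (yΛ : L) ∈ Submodule.restrictScalars ℤ (W : Submodule ℚ L)
        rw [hyL]
        exact Submodule.smul_mem _ _ hw
      set z : N := ⟨yΛ, hyN⟩ with hz
      have hzrep : yΛ = ∑ j, bN.repr z j • (bN j : Λ) := by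
        have h := bN.sum_repr z
        calc yΛ = ((z : N) : Λ) := rfl
          _ = ((∑ j, bN.repr z j • bN j : N) : Λ) := by rw [h]
          _ = ∑ j, bN.repr z j • (bN j : Λ) := by
              push_cast [Submodule.coe_sum]
              rfl
      have hwL : ((d : ℤ) : ℚ) • w = ∑ j, ((bN.repr z j * a j : ℤ) : ℚ) • bMQ (f j) := by
        rw [← hyL]
        conv_lhs => rw [hzrep]
        push_cast [Submodule.coe_sum]
        refine Finset.sum_congr rfl fun j _ => ?_
        rw [hbNL j, ← Int.cast_smul_eq_zsmul ℚ (bN.repr z j), smul_smul]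
      have hwexp : w = ∑ j, (((d : ℤ) : ℚ)⁻¹ * ((bN.repr z j * a j : ℤ) : ℚ)) • bMQ (f j) := by
        have := congrArg (fun t => ((d : ℤ) : ℚ)⁻¹ • t) hwL
        simpa [smul_smul, Finset.smul_sum, inv_mul_cancel₀ hd0] using this
      rw [hwexp]
      exact Submodule.sum_mem _ fun j _ =>
        Submodule.smul_mem _ _ (Submodule.subset_span ⟨f j, ⟨j, rfl⟩, rfl⟩)
    · rw [Submodule.span_le]
      rintro x ⟨j, ⟨i, rfl⟩, rfl⟩
      exact haW i
  -- coordinates outside the range of f vanish on W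
  have hrepr0 : ∀ x ∈ (W : Submodule ℚ L), ∀ k, k ∉ Set.range ⇑f → bMQ.repr x k = 0 := by
    intro x hx k hk
    rw [hWspan] at hx
    induction hx using Submodule.span_induction with
    | mem x hx =>
      obtain ⟨j, ⟨i, rfl⟩, rfl⟩ := hx
      rw [bMQ.repr_self_apply]
      rw [if_neg]
      intro h
      exact hk ⟨i, h⟩
    | zero => simp
    | add x y _ _ hx hy => rw [map_add]; simp [hx, hy]
    | smul t x _ hx => rw [map_smul]; simp [hx]
  -- the matrix of τ in the basis bMQ is integral
  have hΛB : ∀ x : Λ, (x : L) = ∑ i, (bM.repr x i : ℚ) • bMQ i := by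
    intro x
    conv_lhs => rw [← bM.sum_repr x]
    push_cast [Submodule.coe_sum]
    exact Finset.sum_congr rfl fun i _ => by rw [hbMQ, Int.cast_smul_eq_zsmul]
  have hmemΛ : ∀ j, τ (bMQ j) ∈ Λ := fun j =>
    hτΛ _ (by rw [hbMQ]; exact (bM j).2)
  set B : Matrix (Fin n) (Fin n) ℤ := fun i j => bM.repr ⟨τ (bMQ j), hmemΛ j⟩ i with hBdef
  have hτbMQ : ∀ j, τ (bMQ j) = ∑ k, (B k j : ℚ) • bMQ k := fun j => by
    have := hΛB ⟨τ (bMQ j), hmemΛ j⟩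
    simpa using this
  have hBM : ∀ i j, bMQ.repr (τ (bMQ j)) i = (B i j : ℚ) := by
    intro i j
    rw [hτbMQ j]
    exact congrFun (bMQ.repr_sum_self _) i
  have hdetτ : LinearMap.det τ.toLieHom.toLinearMap = (A.det : ℚ) := by
    rw [← LinearMap.det_toMatrix bas]
    have h : LinearMap.toMatrix bas bas τ.toLieHom.toLinearMap
        = A.map ⇑(Int.castRingHom ℚ) := by
      ext i j
      rw [hAeq i j]
      simp [Matrix.map_apply]
    rw [h]
    exact (RingHom.map_det (Int.castRingHom ℚ) A).symm
  -- quotient setup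
  set τ' := quotEquivOfMapEq W τ hmap with hτ'
  set π := LieSubmodule.Quotient.mk' W with hπ
  have hπ0 : ∀ i, i ∈ Set.range ⇑f → π (bMQ i) = 0 := by
    intro i hi
    rw [LieSubmodule.Quotient.mk_eq_zero]
    obtain ⟨k, rfl⟩ := hi
    exact (LieSubmodule.mem_toSubmodule W).mp (haW k)
  set qfam : {j : Fin n // j ∉ Set.range ⇑f} → (L ⧸ W) := fun j => π (bMQ j.1) with hqfam
  have hπsum : ∀ (s : Fin n → ℚ), π (∑ i, s i • bMQ i) = ∑ i, s i • π (bMQ i) := by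
    intro s
    show (LieSubmodule.Quotient.mk' W).toLinearMap (∑ i, s i • bMQ i) = _
    rw [map_sum]
    exact Finset.sum_congr rfl fun i _ =>
      (LieSubmodule.Quotient.mk' W).toLinearMap.map_smul _ _
  have hind : LinearIndependent ℚ qfam := by
    rw [Fintype.linearIndependent_iff]
    intro g hg j₀
    set x : L := ∑ j : {j : Fin n // j ∉ Set.range ⇑f}, g j • bMQ j.1 with hx
    have hπx : π x = 0 := by
      have : π x = ∑ j : {j : Fin n // j ∉ Set.range ⇑f}, g j • qfam j := by
        show (LieSubmodule.Quotient.mk' W).toLinearMap x = _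
        rw [hx, map_sum]
        exact Finset.sum_congr rfl fun j _ =>
          (LieSubmodule.Quotient.mk' W).toLinearMap.map_smul _ _
      rw [this, hg]
    have hxW : x ∈ (W : Submodule ℚ L) := by
      rw [LieSubmodule.Quotient.mk_eq_zero] at hπx
      exact (LieSubmodule.mem_toSubmodule W).mpr hπx
    have h2 : bMQ.repr x j₀.1 = g j₀ := by
      rw [hx, map_sum, Finsupp.finset_sum_apply]
      rw [Finset.sum_eq_single j₀]
      · rw [map_smul]
        simp [Module.Basis.repr_self_apply]
      · intro b _ hb
        rw [map_smul]
        simp only [Finsupp.smul_apply, Module.Basis.repr_self_apply, smul_eq_mul]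
        rw [if_neg (fun h => hb (Subtype.ext h))]
        simp
      · intro h
        exact absurd (Finset.mem_univ _) h
    rw [← h2]
    exact hrepr0 x hxW j₀.1 j₀.2
  have hspan : ⊤ ≤ Submodule.span ℚ (Set.range qfam) := by
    intro y _
    obtain ⟨x, rfl⟩ := LieSubmodule.Quotient.surjective_mk' W y
    have hy : π x = ∑ i, bMQ.repr x i • π (bMQ i) := by
      conv_lhs => rw [← bMQ.sum_repr x]
      exact hπsum _
    rw [hy]
    refine Submodule.sum_mem _ fun i _ => ?_
    by_cases hi : i ∈ Set.range ⇑f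
    · rw [hπ0 i hi, smul_zero]
      exact Submodule.zero_mem _
    · exact Submodule.smul_mem _ _ (Submodule.subset_span ⟨⟨i, hi⟩, rfl⟩)
  set bQ : Module.Basis {j : Fin n // j ∉ Set.range ⇑f} ℚ (L ⧸ W) := Module.Basis.mk hind hspan with hbQ
  have hbQa : ∀ j, bQ j = π (bMQ j.1) := fun j => by rw [hbQ, Module.Basis.mk_apply]
  -- τ' and its matrix
  have hτ'π : ∀ x : L, τ'.toLieHom.toLinearMap (π x) = π (τ x) := fun x =>
    quotEquivOfMapEq_mk W τ hmap x
  have hτW : ∀ x ∈ (W : Submodule ℚ L), τ x ∈ (W : Submodule ℚ L) := by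
    intro x hx
    have := Submodule.mem_map_of_mem (f := (τ.toLinearEquiv : L →ₗ[ℚ] L)) hx
    rwa [hmap] at this
  have hB0 : ∀ k j, k ∉ Set.range ⇑f → j ∈ Set.range ⇑f → B k j = 0 := by
    intro k j hk hj
    have h1 : bMQ j ∈ (W : Submodule ℚ L) := by obtain ⟨i, rfl⟩ := hj; exact haW i
    have h3 := hrepr0 _ (hτW _ h1) k hk
    rw [hBM k j] at h3
    exact_mod_cast h3
  have hsplit : ∀ t : Fin n → (L ⧸ W), (∀ k ∈ Set.range ⇑f, t k = 0) →
      ∑ k, t k = ∑ k : {j : Fin n // j ∉ Set.range ⇑f}, t k.1 := by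
    intro t ht
    rw [← Finset.sum_filter_of_ne (p := fun k => k ∉ Set.range ⇑f)
      (fun x _ hx hmem => hx (ht x hmem))]
    exact Finset.sum_subtype (Finset.univ.filter (fun k => k ∉ Set.range ⇑f))
      (fun x => by simp) t
  have hτ'bQ : ∀ j, τ'.toLieHom.toLinearMap (bQ j)
      = ∑ k : {j : Fin n // j ∉ Set.range ⇑f}, (B k.1 j.1 : ℚ) • bQ k := by
    intro j
    rw [hbQa j, hτ'π, hτbMQ j.1, hπsum]
    rw [hsplit _ (fun k hk => by rw [hπ0 k hk, smul_zero])]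
    exact Finset.sum_congr rfl fun k _ => by rw [hbQa]
  have hCM : ∀ k j, LinearMap.toMatrix bQ bQ τ'.toLieHom.toLinearMap k j = (B k.1 j.1 : ℚ) := by
    intro k j
    rw [LinearMap.toMatrix_apply, hτ'bQ j]
    exact congrFun (bQ.repr_sum_self _) k
  -- block structure
  set eS : {j : Fin n // j ∉ Set.range ⇑f} ⊕ {j : Fin n // j ∈ Set.range ⇑f} ≃ Fin n :=
    (Equiv.sumComm _ _).trans (Equiv.sumCompl (fun j => j ∈ Set.range ⇑f)) with heSdef
  set b₂ : Module.Basis _ ℚ L := bMQ.reindex eS.symm with hb₂def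
  have heS1 : ∀ k : {j : Fin n // j ∉ Set.range ⇑f}, eS (Sum.inl k) = k.1 := fun k => rfl
  have heS2 : ∀ j : {j : Fin n // j ∈ Set.range ⇑f}, eS (Sum.inr j) = j.1 := fun j => rfl
  have hb₂M : ∀ p q, LinearMap.toMatrix b₂ b₂ τ.toLieHom.toLinearMap p q
      = (B (eS p) (eS q) : ℚ) := by
    intro p q
    rw [LinearMap.toMatrix_apply, hb₂def]
    simp only [Module.Basis.repr_reindex_apply, Module.Basis.reindex_apply, Equiv.symm_symm]
    exact hBM _ _
  set C : Matrix _ _ ℤ := fun (k j : {j : Fin n // j ∉ Set.range ⇑f}) => B k.1 j.1 with hCdef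
  set C21 : Matrix _ _ ℤ :=
    fun (k : {j : Fin n // j ∈ Set.range ⇑f}) (j : {j : Fin n // j ∉ Set.range ⇑f}) =>
      B k.1 j.1 with hC21def
  set C22 : Matrix _ _ ℤ := fun (k j : {j : Fin n // j ∈ Set.range ⇑f}) => B k.1 j.1 with hC22def
  have hM2 : LinearMap.toMatrix b₂ b₂ τ.toLieHom.toLinearMap
      = (Matrix.fromBlocks C 0 C21 C22).map (Int.cast : ℤ → ℚ) := by
    ext p q
    rw [hb₂M p q]
    rcases p with k | k <;> rcases q with j | j
    · simp only [heS1, Matrix.map_apply, Matrix.fromBlocks_apply₁₁]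
      rfl
    · simp only [heS1, heS2, Matrix.map_apply, Matrix.fromBlocks_apply₁₂, Matrix.zero_apply]
      rw [hB0 k.1 j.1 k.2 j.2]
    · simp only [heS1, heS2, Matrix.map_apply, Matrix.fromBlocks_apply₂₁]
      rfl
    · simp only [heS2, Matrix.map_apply, Matrix.fromBlocks_apply₂₂]
      rfl
  -- characteristic polynomials
  have hblkmap : (Matrix.fromBlocks C 0 C21 C22).map (Int.cast : ℤ → ℚ)
      = Matrix.fromBlocks (C.map (Int.cast : ℤ → ℚ)) 0 (C21.map (Int.cast : ℤ → ℚ))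
        (C22.map (Int.cast : ℤ → ℚ)) := by
    rw [Matrix.fromBlocks_map]
    congr 1
  have hchar : LinearMap.charpoly τ.toLieHom.toLinearMap
      = (C.map (Int.cast : ℤ → ℚ)).charpoly * (C22.map (Int.cast : ℤ → ℚ)).charpoly := by
    rw [← LinearMap.charpoly_toMatrix τ.toLieHom.toLinearMap b₂, hM2, hblkmap,
      Matrix.charpoly_fromBlocks_zero₁₂]
  have hcharQ : LinearMap.charpoly τ'.toLieHom.toLinearMap
      = (C.map (Int.cast : ℤ → ℚ)).charpoly := by
    rw [← LinearMap.charpoly_toMatrix τ'.toLieHom.toLinearMap bQ]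
    congr 1
    ext k j
    rw [hCM k j]
    simp [Matrix.map_apply, hCdef]
    rfl
  -- determinants
  have hdetblk : C.det * C22.det = A.det := by
    have h1 : LinearMap.det τ.toLieHom.toLinearMap
        = ((Matrix.fromBlocks C 0 C21 C22).map (Int.cast : ℤ → ℚ)).det := by
      rw [← LinearMap.det_toMatrix b₂, hM2]
    rw [hdetτ] at h1
    have h2 : ((Matrix.fromBlocks C 0 C21 C22).map (Int.cast : ℤ → ℚ)).det
        = (((Matrix.fromBlocks C 0 C21 C22).det : ℤ) : ℚ) :=
      (RingHom.map_det (Int.castRingHom ℚ) _).symm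
    rw [h2, Matrix.det_fromBlocks_zero₁₂] at h1
    exact_mod_cast h1.symm
  have hdetC : C.det = 1 ∨ C.det = -1 := by
    rw [← Int.isUnit_iff]
    refine isUnit_of_dvd_unit ⟨C22.det, hdetblk.symm⟩ (Int.isUnit_iff.mpr hdetA)
  -- conclusion
  refine ⟨τ', ?_, ?_⟩
  · intro z hz
    refine hhyp z ?_
    rw [hchar, ← hcharQ, map_mul, hz, zero_mul]
  · obtain ⟨e₁⟩ := Fintype.truncEquivFin {j : Fin n // j ∉ Set.range ⇑f}
    refine ⟨Fintype.card {j : Fin n // j ∉ Set.range ⇑f}, bQ.reindex e₁,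
      C.submatrix ⇑e₁.symm ⇑e₁.symm, ?_, ?_⟩
    · intro i j
      have h1 : LinearMap.toMatrix (bQ.reindex e₁) (bQ.reindex e₁) τ'.toLieHom.toLinearMap i j
          = LinearMap.toMatrix bQ bQ τ'.toLieHom.toLinearMap (e₁.symm i) (e₁.symm j) := by
        simp only [LinearMap.toMatrix_apply, Module.Basis.repr_reindex_apply, Module.Basis.reindex_apply]
      rw [h1, hCM]
      simp only [Matrix.submatrix_apply, hCdef]
      rfl
    · rw [Matrix.det_submatrix_equiv_self e₁.symm C]
      exact hdetC


end Aux

/-- If `L` is a rational nilpotent Anosov Lie algebra of nilpotency class `r ≥ 2`, then the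
quotient Lie algebra `L / C^{r-1}(L)` is again an Anosov Lie algebra. -/
theorem quotient_by_last_lcs_isAnosov (L : Type*) [LieRing L] [LieAlgebra ℚ L]
    [Module.Finite ℚ L] (r : ℕ) (hr : 2 ≤ r)
    (hne : LieModule.lowerCentralSeries ℚ L L (r - 1) ≠ ⊥)
    (hnil : LieModule.lowerCentralSeries ℚ L L r = ⊥)
    (hA : IsAnosovRat L) :
    IsAnosovRat (L ⧸ LieModule.lowerCentralSeries ℚ L L (r - 1)) := by
  obtain ⟨τ, hhyp, huni⟩ := hA
  have hsurj : Function.Surjective τ.toLieHom := τ.toLinearEquiv.surjective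
  have hmapIdeal : LieIdeal.map τ.toLieHom (LieModule.lowerCentralSeries ℚ L L (r - 1))
      = LieModule.lowerCentralSeries ℚ L L (r - 1) :=
    LieIdeal.lowerCentralSeries_map_eq (r - 1) hsurj
  have hmap : ((LieModule.lowerCentralSeries ℚ L L (r - 1) : LieIdeal ℚ L) :
        Submodule ℚ L).map (τ.toLinearEquiv : L →ₗ[ℚ] L)
      = (LieModule.lowerCentralSeries ℚ L L (r - 1) : LieIdeal ℚ L) := by
    calc ((LieModule.lowerCentralSeries ℚ L L (r - 1) : LieIdeal ℚ L) :
          Submodule ℚ L).map (τ.toLinearEquiv : L →ₗ[ℚ] L)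
        = ((LieModule.lowerCentralSeries ℚ L L (r - 1) : LieIdeal ℚ L) :
          Submodule ℚ L).map (τ.toLieHom : L →ₗ[ℚ] L) := rfl
      _ = LieSubmodule.toSubmodule
            (LieIdeal.map τ.toLieHom (LieModule.lowerCentralSeries ℚ L L (r - 1))) :=
          (LieIdeal.coe_map_of_surjective hsurj).symm
      _ = _ := by rw [hmapIdeal]; rfl
  exact aux_quot_anosov _ τ hmap hhyp huni
end

section
/- Let 𝔫 be a finite-dimensional real Lie algebra. If the complexification ℂ ⊗_ℝ 𝔫 has a nonzero abelian factor, then 𝔫 has a nonzero abelian factor. -/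
open scoped TensorProduct

/-- A Lie algebra has a nonzero abelian factor if it is the internal direct sum of an ideal
and a nonzero abelian ideal. -/
def HasAbelianFactor (R L : Type*) [CommRing R] [LieRing L] [LieAlgebra R L] : Prop :=
  ∃ a m : LieIdeal R L, a ≠ ⊥ ∧ (∀ x ∈ a, ∀ y ∈ a, ⁅x, y⁆ = (0 : L)) ∧ m ⊔ a = ⊤ ∧ m ⊓ a = ⊥

/-- The span of all brackets. -/
def bracketSpan (K L : Type*) [CommRing K] [LieRing L] [LieAlgebra K L] : Submodule K L :=
  Submodule.span K {z | ∃ x y : L, ⁅x, y⁆ = z}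

section Field

variable {K L : Type*} [Field K] [LieRing L] [LieAlgebra K L]

theorem hasAbelianFactor_forward (h : HasAbelianFactor K L) :
    ∃ z : L, (∀ y : L, ⁅y, z⁆ = 0) ∧ z ∉ bracketSpan K L := by
  obtain ⟨a, m, ha, hab, hsup, hinf⟩ := h
  -- pick a nonzero element of `a`
  rw [Ne, LieSubmodule.eq_bot_iff] at ha
  push_neg at ha
  obtain ⟨z, hza, hz0⟩ := ha
  have hcentral : ∀ w ∈ a, ∀ y : L, ⁅y, w⁆ = 0 := by
    intro w hw y
    have hy : y ∈ m ⊔ a := by rw [hsup]; trivial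
    rw [LieSubmodule.mem_sup] at hy
    obtain ⟨ym, hym, ya, hya, rfl⟩ := hy
    rw [add_lie, hab ya hya w hw, add_zero]
    have h1 : ⁅ym, w⁆ ∈ a := a.lie_mem hw
    have h2 : ⁅ym, w⁆ ∈ m := by
      rw [← lie_skew]
      exact m.neg_mem (m.lie_mem hym)
    have : ⁅ym, w⁆ ∈ m ⊓ a := (LieSubmodule.mem_inf _ _ _).2 ⟨h2, h1⟩
    rwa [hinf, LieSubmodule.mem_bot] at this
  refine ⟨z, hcentral z hza, fun hzD => ?_⟩
  -- bracketSpan lies in m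
  have hDm : bracketSpan K L ≤ m.toSubmodule := by
    rw [bracketSpan, Submodule.span_le]
    rintro _ ⟨x, y, rfl⟩
    have hx : x ∈ m ⊔ a := by rw [hsup]; trivial
    have hy : y ∈ m ⊔ a := by rw [hsup]; trivial
    rw [LieSubmodule.mem_sup] at hx hy
    obtain ⟨xm, hxm, xa, hxa, rfl⟩ := hx
    obtain ⟨ym, hym, ya, hya, rfl⟩ := hy
    have e : ⁅xm + xa, ym + ya⁆ = ⁅xm, ym⁆ + ⁅xm, ya⁆ + (⁅xa, ym⁆ + ⁅xa, ya⁆) := by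
      rw [add_lie, lie_add, lie_add]
    rw [SetLike.mem_coe, e, hab xa hxa ya hya, add_zero]
    refine m.add_mem (m.add_mem ?_ ?_) (m.lie_mem hym)
    · exact m.lie_mem hym
    · rw [← lie_skew]; exact m.neg_mem (m.lie_mem hxm)
  have hzm : z ∈ m := hDm hzD
  have : z ∈ m ⊓ a := (LieSubmodule.mem_inf _ _ _).2 ⟨hzm, hza⟩
  rw [hinf, LieSubmodule.mem_bot] at this
  exact hz0 this

theorem hasAbelianFactor_backward (z : L) (hz : ∀ y : L, ⁅y, z⁆ = 0)
    (hzD : z ∉ bracketSpan K L) : HasAbelianFactor K L := by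
  have hz0 : z ≠ 0 := fun h => hzD (h ▸ (bracketSpan K L).zero_mem)
  have hz' : ∀ y : L, ⁅z, y⁆ = 0 := fun y => by
    rw [← lie_skew, hz y, neg_zero]
  -- the abelian ideal: the line spanned by z
  set aS : Submodule K L := Submodule.span K {z} with haS
  have ha_lie : ∀ (x : L) (v : L), v ∈ aS → ⁅x, v⁆ ∈ aS := by
    intro x v hv
    rw [haS, Submodule.mem_span_singleton] at hv
    obtain ⟨c, rfl⟩ := hv
    rw [lie_smul, hz x, smul_zero]
    exact aS.zero_mem
  set a : LieIdeal K L := ⟨aS, fun {x v} hv => ha_lie x v hv⟩ with haDef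
  have mem_a : ∀ v : L, v ∈ a ↔ v ∈ aS := fun v => Iff.rfl
  -- complement
  obtain ⟨W, hW⟩ := (bracketSpan K L ⊔ aS).exists_isCompl
  set mS : Submodule K L := bracketSpan K L ⊔ W with hmS
  have hm_lie : ∀ (x : L) (v : L), v ∈ mS → ⁅x, v⁆ ∈ mS := by
    intro x v _
    exact Submodule.mem_sup_left (Submodule.subset_span ⟨x, v, rfl⟩)
  set m : LieIdeal K L := ⟨mS, fun {x v} hv => hm_lie x v hv⟩ with hmDef
  have mem_m : ∀ v : L, v ∈ m ↔ v ∈ mS := fun v => Iff.rfl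
  refine ⟨a, m, ?_, ?_, ?_, ?_⟩
  · intro hbot
    have : z ∈ a := Submodule.subset_span rfl
    rw [hbot, LieSubmodule.mem_bot] at this
    exact hz0 this
  · intro x hx y hy
    rw [mem_a, haS, Submodule.mem_span_singleton] at hx
    obtain ⟨c, rfl⟩ := hx
    rw [smul_lie, hz' y, smul_zero]
  · rw [← LieSubmodule.toSubmodule_inj, LieSubmodule.sup_toSubmodule,
      LieSubmodule.top_toSubmodule]
    show mS ⊔ aS = ⊤
    rw [hmS, sup_assoc, sup_comm W aS, ← sup_assoc]
    exact codisjoint_iff.mp hW.codisjoint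
  · rw [LieSubmodule.eq_bot_iff]
    intro v hv
    rw [LieSubmodule.mem_inf, mem_m, mem_a] at hv
    obtain ⟨hvm, hva⟩ := hv
    rw [hmS, Submodule.mem_sup] at hvm
    obtain ⟨d, hd, w, hw, rfl⟩ := hvm
    have hdw : d + w ∈ bracketSpan K L ⊔ aS := Submodule.mem_sup_right hva
    have hd' : d ∈ bracketSpan K L ⊔ aS := Submodule.mem_sup_left hd
    have hw0 : w ∈ bracketSpan K L ⊔ aS := by
      have he : w = d + w - d := (add_sub_cancel_left d w).symm
      rw [he]
      exact Submodule.sub_mem _ hdw hd'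
    have hw' : w ∈ (bracketSpan K L ⊔ aS) ⊓ W := Submodule.mem_inf.2 ⟨hw0, hw⟩
    rw [hW.disjoint.eq_bot, Submodule.mem_bot] at hw'
    subst hw'
    rw [add_zero] at hva ⊢
    rw [haS, Submodule.mem_span_singleton] at hva
    obtain ⟨c, rfl⟩ := hva
    rcases eq_or_ne c 0 with hc | hc
    · rw [hc, zero_smul]
    · exfalso
      apply hzD
      have : c⁻¹ • (c • z) ∈ bracketSpan K L := (bracketSpan K L).smul_mem _ hd
      rwa [smul_smul, inv_mul_cancel₀ hc, one_smul] at this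

end Field

section Complexify

variable {L : Type*} [LieRing L] [LieAlgebra ℝ L]

/-- Projection `ℂ ⊗ L → L` induced by a real-linear functional on `ℂ`. -/
noncomputable def prC (f : ℂ →ₗ[ℝ] ℝ) : ℂ ⊗[ℝ] L →ₗ[ℝ] L :=
  (TensorProduct.lid ℝ L).toLinearMap.comp (f.rTensor L)

theorem prC_tmul (f : ℂ →ₗ[ℝ] ℝ) (c : ℂ) (x : L) :
    prC f (c ⊗ₜ[ℝ] x) = f c • x := by
  simp [prC]

theorem prC_bracket (f : ℂ →ₗ[ℝ] ℝ) (a : L) (t : ℂ ⊗[ℝ] L) :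
    prC f ⁅(1 : ℂ) ⊗ₜ[ℝ] a, t⁆ = ⁅a, prC f t⁆ := by
  induction t using TensorProduct.induction_on with
  | zero =>
      rw [show ⁅(1 : ℂ) ⊗ₜ[ℝ] a, (0 : ℂ ⊗[ℝ] L)⁆ = 0 from
        @lie_zero (ℂ ⊗[ℝ] L) (ℂ ⊗[ℝ] L) _ _ (LieAlgebra.ExtendScalars.instLieRingModule ℝ ℂ L L) _]
      simp
  | tmul c x =>
      rw [LieAlgebra.ExtendScalars.bracket_tmul, one_mul, prC_tmul, prC_tmul, lie_smul]
  | add s t hs ht =>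
      rw [show ⁅(1 : ℂ) ⊗ₜ[ℝ] a, s + t⁆ = ⁅(1 : ℂ) ⊗ₜ[ℝ] a, s⁆ + ⁅(1 : ℂ) ⊗ₜ[ℝ] a, t⁆ from
        @lie_add (ℂ ⊗[ℝ] L) (ℂ ⊗[ℝ] L) _ _ (LieAlgebra.ExtendScalars.instLieRingModule ℝ ℂ L L) _ _ _,
        map_add, map_add, lie_add, hs, ht]

theorem prC_decomp (t : ℂ ⊗[ℝ] L) :
    (1 : ℂ) ⊗ₜ[ℝ] prC Complex.reLm t + Complex.I ⊗ₜ[ℝ] prC Complex.imLm t = t := by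
  induction t using TensorProduct.induction_on with
  | zero => simp
  | tmul c x =>
      rw [prC_tmul, prC_tmul, TensorProduct.tmul_smul, TensorProduct.tmul_smul,
        TensorProduct.smul_tmul', TensorProduct.smul_tmul', ← TensorProduct.add_tmul]
      congr 1
      simp only [Complex.reLm_coe, Complex.imLm_coe, Complex.real_smul, mul_one]
      exact Complex.re_add_im c
  | add s t hs ht =>
      rw [map_add, map_add, TensorProduct.tmul_add, TensorProduct.tmul_add]
      rw [show ∀ a b c d : ℂ ⊗[ℝ] L, a + b + (c + d) = a + c + (b + d) from
        fun a b c d => by abel]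
      rw [hs, ht]

theorem tmul_mem_bracketSpan {u : L} (hu : u ∈ bracketSpan ℝ L) :
    (1 : ℂ) ⊗ₜ[ℝ] u ∈ bracketSpan ℂ (ℂ ⊗[ℝ] L) := by
  induction hu using Submodule.span_induction with
  | mem w hw =>
      obtain ⟨x, y, rfl⟩ := hw
      apply Submodule.subset_span
      refine ⟨(1 : ℂ) ⊗ₜ[ℝ] x, (1 : ℂ) ⊗ₜ[ℝ] y, ?_⟩
      exact (by rw [one_mul] :
        ((1 : ℂ) * 1) ⊗ₜ[ℝ] ⁅x, y⁆ = (1 : ℂ) ⊗ₜ[ℝ] ⁅x, y⁆)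
  | zero => rw [TensorProduct.tmul_zero]; exact Submodule.zero_mem _
  | add x y hx hy ihx ihy =>
      rw [TensorProduct.tmul_add]; exact Submodule.add_mem _ ihx ihy
  | smul r x hx ih =>
      rw [TensorProduct.tmul_smul, ← algebraMap_smul ℂ r]
      exact Submodule.smul_mem _ _ ih

end Complexify

/-- If the complexification `ℂ ⊗[ℝ] L` of a finite-dimensional real Lie algebra `L` has a
nonzero abelian factor, then `L` has a nonzero abelian factor. -/
theorem abelian_factor_of_complexification (L : Type*) [LieRing L] [LieAlgebra ℝ L]
    [Module.Finite ℝ L] (h : HasAbelianFactor ℂ (ℂ ⊗[ℝ] L)) :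
    HasAbelianFactor ℝ L := by
  obtain ⟨t, ht, htD⟩ := hasAbelianFactor_forward h
  by_contra hC
  have hL : ∀ x : L, (∀ y : L, ⁅y, x⁆ = 0) → x ∈ bracketSpan ℝ L := by
    intro x hx
    by_contra hx'
    exact hC (hasAbelianFactor_backward x hx hx')
  -- both projections of t are central in L
  have hcen : ∀ f : ℂ →ₗ[ℝ] ℝ, ∀ y : L, ⁅y, prC f t⁆ = 0 := by
    intro f y
    rw [← prC_bracket, show ⁅(1 : ℂ) ⊗ₜ[ℝ] y, t⁆ = 0 from ht _, map_zero]
  have hu : prC Complex.reLm t ∈ bracketSpan ℝ L := hL _ (hcen _)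
  have hv : prC Complex.imLm t ∈ bracketSpan ℝ L := hL _ (hcen _)
  apply htD
  rw [← prC_decomp t]
  refine Submodule.add_mem _ (tmul_mem_bracketSpan hu) ?_
  have : Complex.I ⊗ₜ[ℝ] prC Complex.imLm t
      = Complex.I • ((1 : ℂ) ⊗ₜ[ℝ] prC Complex.imLm t) := by
    rw [TensorProduct.smul_tmul', smul_eq_mul, mul_one]
  rw [this]
  exact Submodule.smul_mem _ _ (tmul_mem_bracketSpan hv)
end

section
/- Let λ₁, λ₂, λ₃ ∈ ℂ be the three roots of X³ − 3X + 1. Then for all i ≠ j, the products λ_i·λ_j and λ_i²·λ_j are irrational algebraic units whose minimal polynomials over ℚ have degree 3; moreover none of the numbers λ_i, λ_i·λ_j and λ_i²·λ_j (i ≠ j) has absolute value 1. -/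
open Polynomial

/-! Auxiliary lemmas -/

private lemma int_of_monic_cubic_root (p q r : ℤ) (t : ℚ) (h : t^3 + p*t^2 + q*t + r = 0) :
    ∃ m : ℤ, (m : ℚ) = t := by
  have hint : IsIntegral ℤ t := by
    refine ⟨X^3 + C p * X^2 + C q * X + C r, ?_, ?_⟩
    · monicity!
    · simp only [algebraMap_int_eq, eval₂_add, eval₂_mul, eval₂_pow, eval₂_X, eval₂_C,
        Int.coe_castRingHom]
      linear_combination h
  exact IsIntegrallyClosed.isIntegral_iff.mp hint

private lemma no_root_gA (t : ℚ) : t^3 + 3*t^2 - 1 ≠ 0 := by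
  intro h
  obtain ⟨m, rfl⟩ := int_of_monic_cubic_root 3 0 (-1) t (by push_cast; linear_combination h)
  have h' : m^3 + 3*m^2 - 1 = 0 := by exact_mod_cast h
  have hu : IsUnit m := IsUnit.of_mul_eq_one (m^2 + 3*m) (by ring_nf; omega)
  rcases Int.isUnit_iff.mp hu with rfl | rfl <;> omega

private lemma no_root_gAinv (t : ℚ) : t^3 - 3*t - 1 ≠ 0 := by
  intro h
  obtain ⟨m, rfl⟩ := int_of_monic_cubic_root 0 (-3) (-1) t (by push_cast; linear_combination h)
  have h' : m^3 - 3*m - 1 = 0 := by exact_mod_cast h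
  have hu : IsUnit m := IsUnit.of_mul_eq_one (m^2 - 3) (by ring_nf; omega)
  rcases Int.isUnit_iff.mp hu with rfl | rfl <;> omega

private lemma no_root_g1 (t : ℚ) : t^3 - 6*t^2 + 3*t + 1 ≠ 0 := by
  intro h
  obtain ⟨m, rfl⟩ := int_of_monic_cubic_root (-6) 3 1 t (by push_cast; linear_combination h)
  have h' : m^3 - 6*m^2 + 3*m + 1 = 0 := by exact_mod_cast h
  have hu : IsUnit m := IsUnit.of_mul_eq_one (-(m^2 - 6*m + 3)) (by ring_nf; omega)
  rcases Int.isUnit_iff.mp hu with rfl | rfl <;> omega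

private lemma no_root_g2 (t : ℚ) : t^3 + 3*t^2 - 6*t + 1 ≠ 0 := by
  intro h
  obtain ⟨m, rfl⟩ := int_of_monic_cubic_root 3 (-6) 1 t (by push_cast; linear_combination h)
  have h' : m^3 + 3*m^2 - 6*m + 1 = 0 := by exact_mod_cast h
  have hu : IsUnit m := IsUnit.of_mul_eq_one (-(m^2 + 3*m - 6)) (by ring_nf; omega)
  rcases Int.isUnit_iff.mp hu with rfl | rfl <;> omega

private lemma irr_cubic' (p q r : ℚ) (hnr : ∀ t : ℚ, t^3 + p*t^2 + q*t + r ≠ 0) :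
    Irreducible (X^3 + C p * X^2 + C q * X + C r : ℚ[X]) := by
  have hdeg : (X^3 + C p * X^2 + C q * X + C r : ℚ[X]).natDegree = 3 := by compute_degree!
  rw [Polynomial.irreducible_iff_roots_eq_zero_of_degree_le_three (by omega) (by omega)]
  rw [Multiset.eq_zero_iff_forall_notMem]
  intro t ht
  have hne : (X^3 + C p * X^2 + C q * X + C r : ℚ[X]) ≠ 0 := fun h0 => by
    simp [h0] at hdeg
  rw [mem_roots hne, IsRoot] at ht
  simp only [eval_add, eval_mul, eval_pow, eval_X, eval_C] at ht
  exact hnr t ht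

private lemma minpoly_deg (p q r : ℚ) (x : ℂ) (h : x^3 + p*x^2 + q*x + r = 0)
    (hnr : ∀ t : ℚ, t^3 + p*t^2 + q*t + r ≠ 0) : (minpoly ℚ x).natDegree = 3 := by
  have hirr := irr_cubic' p q r hnr
  have haev : (aeval x) (X^3 + C p * X^2 + C q * X + C r : ℚ[X]) = 0 := by
    simp only [map_add, map_mul, map_pow, aeval_X, aeval_C]
    simp only [eq_ratCast]
    linear_combination h
  have hmon : (X^3 + C p * X^2 + C q * X + C r : ℚ[X]).Monic := by monicity!
  have hmin := minpoly.eq_of_irreducible_of_monic hirr haev hmon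
  rw [← hmin]; compute_degree!

private lemma isIntegral_of_cubic (p q r : ℤ) (x : ℂ) (h : x^3 + p*x^2 + q*x + r = 0) :
    IsIntegral ℤ x := by
  refine ⟨X^3 + C p * X^2 + C q * X + C r, ?_, ?_⟩
  · monicity!
  · simp only [eval₂_add, eval₂_mul, eval₂_pow, eval₂_X, eval₂_C, algebraMap_int_eq,
      Int.coe_castRingHom]
    linear_combination h

private lemma claims (u v e : ℤ) (he : e = 1 ∨ e = -1) (x : ℂ)
    (g : x^3 + u*x^2 + v*x + e = 0)
    (hnr : ∀ t : ℚ, t^3 + u*t^2 + v*t + e ≠ 0)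
    (hnr' : ∀ t : ℚ, t^3 + (e*v)*t^2 + (e*u)*t + e ≠ 0) :
    IsIntegral ℤ x ∧ IsIntegral ℤ x⁻¹ ∧ (¬ ∃ q : ℚ, x = (q : ℂ)) ∧
      (minpoly ℚ x).natDegree = 3 ∧ x ≠ 1 ∧ x ≠ -1 := by
  have hx0 : x ≠ 0 := by
    intro h0
    rw [h0] at g
    have he0 : ((e:ℤ):ℂ) = 0 := by linear_combination g
    have : e = 0 := by exact_mod_cast he0
    rcases he with rfl | rfl <;> norm_num at this
  have hxint : IsIntegral ℤ x := isIntegral_of_cubic u v e x g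
  have hinv : x⁻¹ = -(e:ℂ)*(x^2 + u*x + v) := by
    refine inv_eq_of_mul_eq_one_right ?_
    rcases he with rfl | rfl <;> push_cast <;> push_cast at g
    · linear_combination -g
    · linear_combination g
  have ginv : (x⁻¹)^3 + (e*v)*(x⁻¹)^2 + (e*u)*(x⁻¹) + e = 0 := by
    rw [hinv]
    rcases he with rfl | rfl <;> push_cast <;> push_cast at g
    · linear_combination (1 - (u:ℂ)*v - ((v:ℂ)+(u:ℂ)^2)*x - 2*(u:ℂ)*x^2 - x^3) * g
    · linear_combination (1 + (u:ℂ)*v + ((v:ℂ)+(u:ℂ)^2)*x + 2*(u:ℂ)*x^2 + x^3) * g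
  have hxinvint : IsIntegral ℤ x⁻¹ := isIntegral_of_cubic (e*v) (e*u) e x⁻¹ (by
    push_cast at ginv ⊢; linear_combination ginv)
  have hdeg : (minpoly ℚ x).natDegree = 3 := by
    refine minpoly_deg (u:ℚ) (v:ℚ) (e:ℚ) x (by push_cast at g ⊢; linear_combination g) ?_
    intro t
    have := hnr t
    push_cast at this ⊢
    exact this
  have hirrat : ¬ ∃ q : ℚ, x = (q : ℂ) := by
    rintro ⟨q, rfl⟩
    have h1 : minpoly ℚ ((q:ℂ)) = X - C q := by
      have : (q : ℂ) = algebraMap ℚ ℂ q := by simp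
      rw [this, minpoly.eq_X_sub_C]
    rw [h1] at hdeg
    simp [natDegree_X_sub_C] at hdeg
  have hx1 : x ≠ 1 := by
    intro h1
    rw [h1] at g
    have hz : ((1+u+v+e : ℤ) : ℂ) = 0 := by push_cast; linear_combination g
    have hz' : ((1+u+v+e : ℤ) : ℚ) = 0 := by exact_mod_cast hz
    apply hnr 1
    push_cast at hz' ⊢
    linear_combination hz'
  have hxm1 : x ≠ -1 := by
    intro h1
    rw [h1] at g
    have hz : ((-1+u-v+e : ℤ) : ℂ) = 0 := by push_cast; linear_combination g
    have hz' : ((-1+u-v+e : ℤ) : ℚ) = 0 := by exact_mod_cast hz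
    apply hnr (-1)
    push_cast at hz' ⊢
    linear_combination hz'
  exact ⟨hxint, hxinvint, hirrat, hdeg, hx1, hxm1⟩

private lemma vieta (a b c : ℂ) (ha : a^3 - 3*a + 1 = 0) (hb : b^3 - 3*b + 1 = 0)
    (hc : c^3 - 3*c + 1 = 0) (hab : a ≠ b) (hac : a ≠ c) (hbc : b ≠ c) :
    a + b + c = 0 ∧ a*b + b*c + c*a = -3 ∧ a*b*c = -1 := by
  have h1 : a^2 + a*b + b^2 - 3 = 0 := by
    have := sub_ne_zero.mpr hab
    have h := mul_eq_zero.mp (show (a - b) * (a^2 + a*b + b^2 - 3) = 0 by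
      linear_combination ha - hb)
    tauto
  have h2 : a^2 + a*c + c^2 - 3 = 0 := by
    have := sub_ne_zero.mpr hac
    have h := mul_eq_zero.mp (show (a - c) * (a^2 + a*c + c^2 - 3) = 0 by
      linear_combination ha - hc)
    tauto
  have s1 : a + b + c = 0 := by
    have := sub_ne_zero.mpr hbc
    have h := mul_eq_zero.mp (show (b - c) * (a + b + c) = 0 by
      linear_combination h1 - h2)
    tauto
  have s2 : a*b + b*c + c*a = -3 := by linear_combination -h1 + (a+b)*s1
  have s3 : a*b*c = -1 := by
    linear_combination (ha + hb + hc)/3 + (1 - (a^2+b^2+c^2-a*b-b*c-c*a)/3) * s1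
  exact ⟨s1, s2, s3⟩

private lemma factor_id (a b c : ℂ) (ha : a^3 - 3*a + 1 = 0) (hb : b^3 - 3*b + 1 = 0)
    (hc : c^3 - 3*c + 1 = 0) (hab : a ≠ b) (hac : a ≠ c) (hbc : b ≠ c) (x : ℂ) :
    (x - a) * (x - b) * (x - c) = x^3 - 3*x + 1 := by
  obtain ⟨s1, s2, s3⟩ := vieta a b c ha hb hc hab hac hbc
  linear_combination (-x^2)*s1 + x*s2 - s3

private lemma exists_real_roots : ∃ x1 x2 x3 : ℝ, (x1^3 - 3*x1 + 1 = 0) ∧ (x2^3 - 3*x2 + 1 = 0)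
    ∧ (x3^3 - 3*x3 + 1 = 0) ∧ x1 ≠ x2 ∧ x1 ≠ x3 ∧ x2 ≠ x3 := by
  set f : ℝ → ℝ := fun x => x^3 - 3*x + 1 with hf
  have hcont : Continuous f := by continuity
  obtain ⟨x1, hx1I, hx1⟩ : ∃ x ∈ Set.Icc (-2:ℝ) 0, f x = 0 := by
    have := intermediate_value_Icc (by norm_num : (-2:ℝ) ≤ 0) hcont.continuousOn
    have h0 : (0:ℝ) ∈ Set.Icc (f (-2)) (f 0) := by norm_num [hf]
    obtain ⟨x, hx, hfx⟩ := this h0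
    exact ⟨x, hx, hfx⟩
  obtain ⟨x2, hx2I, hx2⟩ : ∃ x ∈ Set.Icc (0:ℝ) 1, f x = 0 := by
    have := intermediate_value_Icc' (by norm_num : (0:ℝ) ≤ 1) hcont.continuousOn
    have h0 : (0:ℝ) ∈ Set.Icc (f 1) (f 0) := by norm_num [hf]
    obtain ⟨x, hx, hfx⟩ := this h0
    exact ⟨x, hx, hfx⟩
  obtain ⟨x3, hx3I, hx3⟩ : ∃ x ∈ Set.Icc (1:ℝ) 2, f x = 0 := by
    have := intermediate_value_Icc (by norm_num : (1:ℝ) ≤ 2) hcont.continuousOn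
    have h0 : (0:ℝ) ∈ Set.Icc (f 1) (f 2) := by norm_num [hf]
    obtain ⟨x, hx, hfx⟩ := this h0
    exact ⟨x, hx, hfx⟩
  have e1 : x1^3 - 3*x1 + 1 = 0 := hx1
  have e2 : x2^3 - 3*x2 + 1 = 0 := hx2
  have e3 : x3^3 - 3*x3 + 1 = 0 := hx3
  have hx1ne0 : x1 ≠ 0 := fun h => by rw [h] at e1; norm_num at e1
  have hx2ne0 : x2 ≠ 0 := fun h => by rw [h] at e2; norm_num at e2
  have hx2ne1 : x2 ≠ 1 := fun h => by rw [h] at e2; norm_num at e2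
  have hx3ne1 : x3 ≠ 1 := fun h => by rw [h] at e3; norm_num at e3
  have h1 : x1 < 0 := lt_of_le_of_ne hx1I.2 hx1ne0
  have h2 : 0 < x2 := lt_of_le_of_ne hx2I.1 (Ne.symm hx2ne0)
  have h2' : x2 < 1 := lt_of_le_of_ne hx2I.2 hx2ne1
  have h3 : 1 < x3 := lt_of_le_of_ne hx3I.1 (Ne.symm hx3ne1)
  exact ⟨x1, x2, x3, e1, e2, e3, by linarith, by linarith, by linarith⟩

private lemma root_is_real (z : ℂ) (hz : z^3 - 3*z + 1 = 0) : ∃ r : ℝ, z = (r : ℂ) := by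
  obtain ⟨x1, x2, x3, e1, e2, e3, h12, h13, h23⟩ := exists_real_roots
  have c1 : (x1:ℂ)^3 - 3*(x1:ℂ) + 1 = 0 := by exact_mod_cast congrArg (Complex.ofReal) e1
  have c2 : (x2:ℂ)^3 - 3*(x2:ℂ) + 1 = 0 := by exact_mod_cast congrArg (Complex.ofReal) e2
  have c3 : (x3:ℂ)^3 - 3*(x3:ℂ) + 1 = 0 := by exact_mod_cast congrArg (Complex.ofReal) e3
  have hfac := factor_id (x1:ℂ) (x2:ℂ) (x3:ℂ) c1 c2 c3
    (by exact_mod_cast h12) (by exact_mod_cast h13) (by exact_mod_cast h23) z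
  rw [hz] at hfac
  rcases mul_eq_zero.mp hfac with h | h
  · rcases mul_eq_zero.mp h with h | h
    · exact ⟨x1, by linear_combination h⟩
    · exact ⟨x2, by linear_combination h⟩
  · exact ⟨x3, by linear_combination h⟩

private lemma abs_ne_one_of_real (x : ℂ) (r : ℝ) (hx : x = (r:ℂ)) (h1 : x ≠ 1)
    (h2 : x ≠ -1) : ‖x‖ ≠ 1 := by
  subst hx
  rw [Complex.norm_real, Real.norm_eq_abs]
  intro h
  rcases (abs_eq (by norm_num : (0:ℝ) ≤ 1)).mp h with h' | h'
  · exact h1 (by rw [h']; norm_num)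
  · exact h2 (by rw [h']; push_cast; norm_num)

private lemma key_s18 (a b c : ℂ) (ha : a^3 - 3*a + 1 = 0) (hb : b^3 - 3*b + 1 = 0)
    (hc : c^3 - 3*c + 1 = 0) (hab : a ≠ b) (hac : a ≠ c) (hbc : b ≠ c) :
    (IsIntegral ℤ (a*b) ∧ IsIntegral ℤ (a*b)⁻¹ ∧ (¬ ∃ q : ℚ, a*b = (q:ℂ)) ∧
      (minpoly ℚ (a*b)).natDegree = 3) ∧
    (IsIntegral ℤ (a^2*b) ∧ IsIntegral ℤ (a^2*b)⁻¹ ∧ (¬ ∃ q : ℚ, a^2*b = (q:ℂ)) ∧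
      (minpoly ℚ (a^2*b)).natDegree = 3) ∧
    (a*b ≠ 1 ∧ a*b ≠ -1) ∧ (a^2*b ≠ 1 ∧ a^2*b ≠ -1) := by
  obtain ⟨s1, s2, s3⟩ := vieta a b c ha hb hc hab hac hbc
  have hc0 : c ≠ 0 := by intro h; rw [h] at hc; norm_num at hc
  have hA : a*b = c^2 - 3 := by
    apply mul_right_cancel₀ hc0
    linear_combination s3 - hc
  have gA : (a*b)^3 + ((3:ℤ):ℂ)*(a*b)^2 + ((0:ℤ):ℂ)*(a*b) + ((-1:ℤ):ℂ) = 0 := by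
    push_cast
    rw [hA]
    linear_combination (c^3 - 3*c - 1) * hc
  obtain ⟨i1, i2, i3, i4, i5, i6⟩ := claims 3 0 (-1) (Or.inr rfl) (a*b) gA
    (fun t h => no_root_gA t (by push_cast at h; linear_combination h))
    (fun t h => no_root_gAinv t (by push_cast at h; linear_combination h))
  have hroot2 : (a^2-2)^3 - 3*(a^2-2) + 1 = 0 := by linear_combination (a^3 - 3*a - 1) * ha
  have hne2a : a^2 - 2 ≠ a := by
    intro h
    have h' : (a - 2) * (a + 1) = 0 := by linear_combination h
    rcases mul_eq_zero.mp h' with h2 | h2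
    · have h3 : a = 2 := by linear_combination h2
      rw [h3] at ha; norm_num at ha
    · have h3 : a = -1 := by linear_combination h2
      rw [h3] at ha; norm_num at ha
  have hfac := factor_id a b c ha hb hc hab hac hbc (a^2 - 2)
  rw [hroot2] at hfac
  have hcase : b = a^2 - 2 ∨ c = a^2 - 2 := by
    rcases mul_eq_zero.mp hfac with h | h
    · rcases mul_eq_zero.mp h with h' | h'
      · exact absurd (show a^2 - 2 = a by linear_combination h') hne2a
      · left; linear_combination -h'
    · right; linear_combination -h
  have hB : IsIntegral ℤ (a^2*b) ∧ IsIntegral ℤ (a^2*b)⁻¹ ∧ (¬ ∃ q : ℚ, a^2*b = (q:ℂ)) ∧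
      (minpoly ℚ (a^2*b)).natDegree = 3 ∧ a^2*b ≠ 1 ∧ a^2*b ≠ -1 := by
    rcases hcase with h2 | h2
    · have hv : a^2*b = a^2 - a := by rw [h2]; linear_combination a*ha
      have gB : (a^2*b)^3 + (((-6):ℤ):ℂ)*(a^2*b)^2 + ((3:ℤ):ℂ)*(a^2*b) + ((1:ℤ):ℂ) = 0 := by
        push_cast
        rw [hv]
        linear_combination (a^3 - 3*a^2 + 1) * ha
      exact claims (-6) 3 1 (Or.inl rfl) (a^2*b) gB
        (fun t h => no_root_g1 t (by push_cast at h; linear_combination h))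
        (fun t h => no_root_g2 t (by push_cast at h; linear_combination h))
    · have hbval : b = -a^2 - a + 2 := by linear_combination s1 - h2
      have hv : a^2*b = -a^2 - 2*a + 1 := by rw [hbval]; linear_combination (-a-1)*ha
      have gB : (a^2*b)^3 + ((3:ℤ):ℂ)*(a^2*b)^2 + (((-6):ℤ):ℂ)*(a^2*b) + ((1:ℤ):ℂ) = 0 := by
        push_cast
        rw [hv]
        linear_combination (-1 - 9*a - 6*a^2 - a^3) * ha
      exact claims 3 (-6) 1 (Or.inl rfl) (a^2*b) gB
        (fun t h => no_root_g2 t (by push_cast at h; linear_combination h))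
        (fun t h => no_root_g1 t (by push_cast at h; linear_combination h))
  exact ⟨⟨i1, i2, i3, i4⟩, ⟨hB.1, hB.2.1, hB.2.2.1, hB.2.2.2.1⟩, ⟨i5, i6⟩,
    ⟨hB.2.2.2.2.1, hB.2.2.2.2.2⟩⟩

/-- Let `λ₀, λ₁, λ₂` be the three (distinct) complex roots of `X³ − 3X + 1`. For all
`i ≠ j`, the products `λᵢ·λⱼ` and `λᵢ²·λⱼ` are irrational algebraic units whose minimal
polynomials over `ℚ` have degree `3`; moreover none of the numbers `λᵢ`, `λᵢ·λⱼ` and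
`λᵢ²·λⱼ` (`i ≠ j`) has absolute value `1`. -/
theorem products_of_cubic_roots_are_units (l : Fin 3 → ℂ)
    (hroot : ∀ i, (l i) ^ 3 - 3 * (l i) + 1 = 0) (hinj : Function.Injective l) :
    (∀ i j, i ≠ j →
      (IsIntegral ℤ (l i * l j) ∧ IsIntegral ℤ (l i * l j)⁻¹ ∧
        (¬ ∃ q : ℚ, l i * l j = (q : ℂ)) ∧ (minpoly ℚ (l i * l j)).natDegree = 3) ∧
      (IsIntegral ℤ ((l i) ^ 2 * l j) ∧ IsIntegral ℤ ((l i) ^ 2 * l j)⁻¹ ∧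
        (¬ ∃ q : ℚ, (l i) ^ 2 * l j = (q : ℂ)) ∧
        (minpoly ℚ ((l i) ^ 2 * l j)).natDegree = 3)) ∧
    (∀ i, ‖l i‖ ≠ 1) ∧
    (∀ i j, i ≠ j →
      ‖l i * l j‖ ≠ 1 ∧ ‖(l i) ^ 2 * l j‖ ≠ 1) := by
  have hne : ∀ i j : Fin 3, i ≠ j → l i ≠ l j := fun i j h e => h (hinj e)
  have third : ∀ i j : Fin 3, i ≠ j → ∃ k, i ≠ k ∧ j ≠ k := by decide
  have K : ∀ i j : Fin 3, i ≠ j →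
      (IsIntegral ℤ (l i * l j) ∧ IsIntegral ℤ (l i * l j)⁻¹ ∧
        (¬ ∃ q : ℚ, l i * l j = (q:ℂ)) ∧ (minpoly ℚ (l i * l j)).natDegree = 3) ∧
      (IsIntegral ℤ ((l i)^2 * l j) ∧ IsIntegral ℤ ((l i)^2 * l j)⁻¹ ∧
        (¬ ∃ q : ℚ, (l i)^2 * l j = (q:ℂ)) ∧ (minpoly ℚ ((l i)^2 * l j)).natDegree = 3) ∧
      (l i * l j ≠ 1 ∧ l i * l j ≠ -1) ∧ ((l i)^2 * l j ≠ 1 ∧ (l i)^2 * l j ≠ -1) := by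
    intro i j hij
    obtain ⟨k, hik, hjk⟩ := third i j hij
    have ha := hroot i
    have hb := hroot j
    have hk := hroot k
    exact key_s18 (l i) (l j) (l k) (by linear_combination ha) (by linear_combination hb)
      (by linear_combination hk) (hne i j hij) (hne i k hik) (hne j k hjk)
  refine ⟨fun i j hij => ⟨(K i j hij).1, (K i j hij).2.1⟩, ?_, ?_⟩
  · intro i
    obtain ⟨r, hr⟩ := root_is_real (l i) (by linear_combination hroot i)
    refine abs_ne_one_of_real (l i) r hr ?_ ?_
    · intro h
      have := hroot i
      rw [h] at this
      norm_num at this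
    · intro h
      have := hroot i
      rw [h] at this
      norm_num at this
  · intro i j hij
    obtain ⟨ra, hra⟩ := root_is_real (l i) (by linear_combination hroot i)
    obtain ⟨rb, hrb⟩ := root_is_real (l j) (by linear_combination hroot j)
    obtain ⟨-, -, ⟨n1, n2⟩, n3, n4⟩ := K i j hij
    constructor
    · exact abs_ne_one_of_real _ (ra*rb) (by rw [hra, hrb]; push_cast; ring) n1 n2
    · exact abs_ne_one_of_real _ (ra^2*rb) (by rw [hra, hrb]; push_cast; ring) n3 n4
end
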